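/- arXiv:2208.08550 — 6 statements merged into one kernel-verified Lean document; each statement's English description precedes it below -/
import Mathlib

section
/- Let F be an infinite field and let I be the ideal of Z_2-graded identities of UT_2(F)^{(-)} with its canonical Z_2-grading. If f = [z, a_1 y_1, …, a_n y_n] and g = [z, a'_1 y_1, …, a'_m y_m] are elements of B and V_f = (a_1,…,a_n) ≤ V_g = (a'_1,…,a'_m) in the Higman order on finite sequences of positive integers, then g is a consequence of f modulo I, i.e. g ∈ ⟨{f} ∪ I⟩, the smallest T_{Z_2}-ideal containing f and I. -/
open FreeLieAlgebra

attribute [local instance 100] LieRing.ofAssociativeRing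

/-- The free `ℤ/n`-graded Lie algebra over `F`: the free Lie algebra on countably many
variables of each homogeneous degree `g : ZMod n`; the variable `(g, i)` is the `i`-th
variable of degree `g`. -/
abbrev FreeGLie (F : Type) [Field F] (n : ℕ) := FreeLieAlgebra F (ZMod n × ℕ)

/-- Homogeneous Lie monomials (bracket words) of degree `g`. -/
inductive HomWord (F : Type) [Field F] (n : ℕ) : ZMod n → FreeGLie F n → Prop
  | of (g : ZMod n) (i : ℕ) : HomWord F n g (FreeLieAlgebra.of F (g, i))
  | bracket {g h : ZMod n} {x y : FreeGLie F n} :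
      HomWord F n g x → HomWord F n h y → HomWord F n (g + h) ⁅x, y⁆

/-- The homogeneous component of degree `g` of the free graded Lie algebra. -/
noncomputable def homComp (F : Type) [Field F] (n : ℕ) (g : ZMod n) : Submodule F (FreeGLie F n) :=
  Submodule.span F {x | HomWord F n g x}

/-- A graded substitution sends each variable of degree `g` to a homogeneous element
of degree `g`; it induces a grading-preserving endomorphism via `FreeLieAlgebra.lift`,
and every grading-preserving endomorphism arises this way. -/
def IsGradedSubst (F : Type) [Field F] (n : ℕ) (s : ZMod n × ℕ → FreeGLie F n) : Prop :=
  ∀ g i, s (g, i) ∈ homComp F n g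

/-- `S` is a `T`-ideal: the carrier of a Lie ideal of the free graded Lie algebra which is
stable under all grading-preserving endomorphisms. -/
structure IsTIdeal (F : Type) [Field F] (n : ℕ) (S : Set (FreeGLie F n)) : Prop where
  isIdeal : ∃ J : LieIdeal F (FreeGLie F n), S = ↑J
  substClosed : ∀ s, IsGradedSubst F n s → ∀ x ∈ S, FreeLieAlgebra.lift F s x ∈ S

/-- The smallest `T`-ideal containing `S`. -/
def TClosure (F : Type) [Field F] (n : ℕ) (S : Set (FreeGLie F n)) : Set (FreeGLie F n) :=
  ⋂₀ {T | IsTIdeal F n T ∧ S ⊆ T}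

/-- The degree-`g` component of the canonical `ZMod n`-grading of `UT_n(F)⁽⁻⁾`:
the span of the matrix units `e_{ij}` with `i ≤ j` and `j - i = g` in `ZMod n`. -/
def Lcomp (F : Type) [Field F] (n : ℕ) (g : ZMod n) : Submodule F (Matrix (Fin n) (Fin n) F) :=
  Submodule.span F {A | ∃ i j : Fin n, i ≤ j ∧ ((j : ℕ) : ZMod n) - ((i : ℕ) : ZMod n) = g ∧
    A = Matrix.single i j 1}

/-- The set of `ZMod n`-graded identities of `UT_n(F)⁽⁻⁾` (with commutator bracket),
i.e. the elements of the free graded Lie algebra vanishing under every substitution that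
sends each variable of degree `g` into the component `Lcomp F n g`. -/
def gradedId (F : Type) [Field F] (n : ℕ) : Set (FreeGLie F n) :=
  {f | ∀ v : ZMod n × ℕ → Matrix (Fin n) (Fin n) F,
    (∀ g i, v (g, i) ∈ Lcomp F n g) → FreeLieAlgebra.lift F v f = 0}

/-- The left-normed bracket `[x, l₁, l₂, …]`. -/
noncomputable def lnw (F : Type) [Field F] (n : ℕ) (x : FreeGLie F n)
    (l : List (FreeGLie F n)) : FreeGLie F n :=
  l.foldl (fun a b => ⁅a, b⁆) x

/-- The degree-0 variable `y_i`. -/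
noncomputable def yv (F : Type) [Field F] (n : ℕ) (i : ℕ) : FreeGLie F n :=
  FreeLieAlgebra.of F ((0 : ZMod n), i)

/-- The list `y_off, …, y_off (a₁ times), y_{off+1}, … (a₂ times), …` of degree-0
variables with multiplicities given by the list `a`. -/
noncomputable def yblock (F : Type) [Field F] (n : ℕ) : ℕ → List ℕ → List (FreeGLie F n)
  | _, [] => []
  | off, a :: rest => List.replicate a (yv F n off) ++ yblock F n (off + 1) rest

/-- The element `[z, a₁y₁, …, aₘyₘ]` of the set `B` (here `z` is the degree-1 variable
`(1,0)` and the `yᵢ` are degree-0 variables), for an exponent list `a = (a₁,…,aₘ)`. -/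
noncomputable def Bel (F : Type) [Field F] (a : List ℕ) : FreeGLie F 2 :=
  lnw F 2 (FreeLieAlgebra.of F ((1 : ZMod 2), 0)) (yblock F 2 0 a)


section BF
variable {L : Type*} [LieRing L]

/-- left-normed fold of brackets -/
def brfold (x : L) (l : List L) : L := l.foldl (fun a b => ⁅a, b⁆) x

@[simp] lemma brfold_nil (x : L) : brfold x [] = x := rfl
@[simp] lemma brfold_cons (x y : L) (l : List L) : brfold x (y :: l) = brfold ⁅x, y⁆ l := rfl

lemma brfold_perm {l l' : List L} (h : l.Perm l')
    (hc : ∀ a ∈ l, ∀ b ∈ l, ⁅a, b⁆ = 0) : ∀ x : L, brfold x l = brfold x l' := by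
  induction h with
  | nil => intro x; rfl
  | cons a h ih =>
      intro x
      exact ih (fun p hp q hq => hc p (List.mem_cons_of_mem _ hp) q (List.mem_cons_of_mem _ hq)) ⁅x, a⁆
  | swap a b l =>
      intro x
      have h0 : ⁅b, a⁆ = 0 := hc b (by simp) a (by simp)
      have h1 : (0 : L) = ⁅⁅x, b⁆, a⁆ + ⁅b, ⁅x, a⁆⁆ := by
        rw [← leibniz_lie, h0, lie_zero]
      have h2 : ⁅⁅x, b⁆, a⁆ = ⁅⁅x, a⁆, b⁆ := by
        rw [← lie_skew ⁅x, a⁆ b]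
        exact eq_neg_of_add_eq_zero_left h1.symm
      show brfold ⁅⁅x, b⁆, a⁆ l = brfold ⁅⁅x, a⁆, b⁆ l
      rw [h2]
  | trans h₁ h₂ ih₁ ih₂ =>
      intro x
      exact (ih₁ hc x).trans (ih₂ (fun p hp q hq => hc p (h₁.mem_iff.2 hp) q (h₁.mem_iff.2 hq)) x)

lemma brfold_map {R : Type*} [CommRing R] {M : Type*} [LieRing M]
    [LieAlgebra R L] [LieAlgebra R M] (f : L →ₗ⁅R⁆ M) (x : L) (l : List L) :
    f (brfold x l) = brfold (f x) (l.map f) := by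
  induction l generalizing x with
  | nil => rfl
  | cons y l ih => simp only [brfold_cons, List.map_cons, ih, LieHom.map_lie]

lemma map_fix {α : Type*} {f : α → α} : ∀ {l : List α}, (∀ w ∈ l, f w = w) → l.map f = l := by
  intro l h
  induction l with
  | nil => rfl
  | cons a l ih => simp only [List.map_cons, h a (by simp), ih fun w hw => h w (by simp [hw])]

end BF

section Mat
variable (F : Type) [Field F]

/-- 2×2 matrices with zero off-diagonal entries -/
def diag2 : Submodule F (Matrix (Fin 2) (Fin 2) F) where
  carrier := {A | A 0 1 = 0 ∧ A 1 0 = 0}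
  add_mem' := by rintro a b ⟨h1, h2⟩ ⟨h3, h4⟩; simp_all [Matrix.add_apply]
  zero_mem' := by simp
  smul_mem' := by rintro c a ⟨h1, h2⟩; simp_all [Matrix.smul_apply]

lemma Lcomp0_le_diag2 : Lcomp F 2 0 ≤ diag2 F := by
  rw [Lcomp]
  apply Submodule.span_le.2
  rintro A ⟨i, j, hij, hg, rfl⟩
  fin_cases i <;> fin_cases j <;>
    first
      | exact absurd hg (by decide)
      | exact absurd hij (by decide)
      | exact ⟨by simp [Matrix.single], by simp [Matrix.single]⟩

lemma diag2_lie_eq_zero {A B : Matrix (Fin 2) (Fin 2) F}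
    (hA : A ∈ diag2 F) (hB : B ∈ diag2 F) : ⁅A, B⁆ = 0 := by
  obtain ⟨h1, h2⟩ := hA
  obtain ⟨h3, h4⟩ := hB
  rw [Ring.lie_def, sub_eq_zero]
  ext i j
  fin_cases i <;> fin_cases j <;>
    simp [Matrix.mul_apply, Fin.sum_univ_two, h1, h2, h3, h4, mul_comm]

lemma Lcomp0_lie_eq_zero {A B : Matrix (Fin 2) (Fin 2) F}
    (hA : A ∈ Lcomp F 2 0) (hB : B ∈ Lcomp F 2 0) : ⁅A, B⁆ = 0 :=
  diag2_lie_eq_zero F (Lcomp0_le_diag2 F hA) (Lcomp0_le_diag2 F hB)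

end Mat

section Free
variable (F : Type) [Field F]

/-- the distinguished degree-1 variable z -/
noncomputable def zvr : FreeGLie F 2 := FreeLieAlgebra.of F ((1 : ZMod 2), 0)

lemma lift_yv (v : ZMod 2 × ℕ → Matrix (Fin 2) (Fin 2) F) (j : ℕ) :
    FreeLieAlgebra.lift F v (yv F 2 j) = v ((0 : ZMod 2), j) :=
  FreeLieAlgebra.lift_of_apply v _

/-- permuting a list of degree-0 variables after any element is a graded identity -/
lemma perm_diff_mem_gradedId (x : FreeGLie F 2) {l l' : List (FreeGLie F 2)}
    (hp : l.Perm l') (hl : ∀ w ∈ l, ∃ j, w = yv F 2 j) :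
    brfold x l - brfold x l' ∈ gradedId F 2 := by
  intro v hv
  rw [map_sub, brfold_map, brfold_map, sub_eq_zero]
  apply brfold_perm (hp.map _)
  intro p hpmem q hqmem
  have hmem : ∀ w ∈ (l.map (FreeLieAlgebra.lift F v)), w ∈ Lcomp F 2 0 := by
    intro w hw
    obtain ⟨u, hu, rfl⟩ := List.mem_map.1 hw
    obtain ⟨j, rfl⟩ := hl u hu
    rw [lift_yv]
    exact hv 0 j
  exact Lcomp0_lie_eq_zero F (hmem p hpmem) (hmem q hqmem)

end Free

section TId
variable {F : Type} [Field F] (J : LieIdeal F (FreeGLie F 2))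
  (hI : gradedId F 2 ⊆ ↑J)
  (hs : ∀ s, IsGradedSubst F 2 s → ∀ x ∈ (J : Set (FreeGLie F 2)),
    FreeLieAlgebra.lift F s x ∈ (J : Set (FreeGLie F 2)))

include hI in
lemma T_perm (x : FreeGLie F 2) {l l' : List (FreeGLie F 2)} (hp : l.Perm l')
    (hl : ∀ w ∈ l, ∃ j, w = yv F 2 j) (h : brfold x l ∈ J) : brfold x l' ∈ J := by
  have hd : brfold x l - brfold x l' ∈ J := hI (perm_diff_mem_gradedId F x hp hl)
  have heq : brfold x l' = brfold x l - (brfold x l - brfold x l') :=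
    (sub_sub_cancel _ _).symm
  rw [heq]
  exact sub_mem h hd

include hs in
lemma T_cons (k : ℕ) {l : List (FreeGLie F 2)} (hl : ∀ w ∈ l, ∃ j, w = yv F 2 j)
    (h : brfold (zvr F) l ∈ J) : brfold (zvr F) (yv F 2 k :: l) ∈ J := by
  set s : ZMod 2 × ℕ → FreeGLie F 2 := fun gi =>
    if gi.1 = 0 then FreeLieAlgebra.of F gi else ⁅FreeLieAlgebra.of F gi, yv F 2 k⁆ with hsdef
  have hgs : IsGradedSubst F 2 s := by
    intro g i
    by_cases hg : g = 0
    · simp only [hsdef, hg, if_pos rfl]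
      exact Submodule.subset_span (HomWord.of 0 i)
    · simp only [hsdef, if_neg hg]
      have : HomWord F 2 (g + 0) ⁅FreeLieAlgebra.of F (g, i), yv F 2 k⁆ :=
        HomWord.bracket (HomWord.of g i) (HomWord.of 0 k)
      rw [add_zero] at this
      exact Submodule.subset_span this
  have h2 := hs s hgs _ h
  rw [brfold_map] at h2
  have e1 : FreeLieAlgebra.lift F s (zvr F) = ⁅zvr F, yv F 2 k⁆ := by
    rw [zvr, FreeLieAlgebra.lift_of_apply]
    simp only [hsdef]
    rw [if_neg (by decide : ¬ (1 : ZMod 2) = 0)]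
  have e2 : l.map (FreeLieAlgebra.lift F s) = l := by
    apply map_fix
    intro w hw
    obtain ⟨j, rfl⟩ := hl w hw
    rw [yv, FreeLieAlgebra.lift_of_apply]
    simp [hsdef]
  rw [e1, e2] at h2
  exact h2

include hI hs in
lemma T_replicate (m k : ℕ) {l : List (FreeGLie F 2)} (hl : ∀ w ∈ l, ∃ j, w = yv F 2 j)
    (h : brfold (zvr F) l ∈ J) :
    brfold (zvr F) (List.replicate m (yv F 2 k) ++ l) ∈ J := by
  induction m with
  | zero => simpa using h
  | succ m ih =>
      rw [List.replicate_succ, List.cons_append]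
      apply T_cons J hs
      · intro w hw
        rcases List.mem_append.1 hw with hw | hw
        · exact ⟨k, List.eq_of_mem_replicate hw⟩
        · exact hl w hw
      · exact ih

lemma yblock_mem {c : List ℕ} : ∀ {o : ℕ} {w : FreeGLie F 2},
    w ∈ yblock F 2 o c → ∃ j, o ≤ j ∧ w = yv F 2 j := by
  induction c with
  | nil => intro o w hw; simp [yblock] at hw
  | cons a c ih =>
      intro o w hw
      rw [yblock] at hw
      rcases List.mem_append.1 hw with hw | hw
      · exact ⟨o, le_refl o, List.eq_of_mem_replicate hw⟩
      · obtain ⟨j, hj, rfl⟩ := ih hw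
        exact ⟨j, by omega, rfl⟩

include hs in
lemma T_shift (o : ℕ) {r : List (FreeGLie F 2)}
    (hr : ∀ w ∈ r, ∃ j, j < o ∧ w = yv F 2 j) (c : List ℕ)
    (h : brfold (zvr F) (r ++ yblock F 2 o c) ∈ J) :
    brfold (zvr F) (r ++ yblock F 2 (o + 1) c) ∈ J := by
  set ρ : ℕ → ℕ := fun j => if j < o then j else j + 1 with hρ
  set s : ZMod 2 × ℕ → FreeGLie F 2 := fun gi =>
    if gi.1 = 0 then yv F 2 (ρ gi.2) else FreeLieAlgebra.of F gi with hsdef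
  have hgs : IsGradedSubst F 2 s := by
    intro g i
    by_cases hg : g = 0
    · subst hg
      simp only [hsdef, if_pos rfl]
      exact Submodule.subset_span (HomWord.of 0 (ρ i))
    · simp only [hsdef, if_neg hg]
      exact Submodule.subset_span (HomWord.of g i)
  have h2 := hs s hgs _ h
  rw [brfold_map] at h2
  have e1 : FreeLieAlgebra.lift F s (zvr F) = zvr F := by
    rw [zvr, FreeLieAlgebra.lift_of_apply]
    simp only [hsdef]
    rw [if_neg (by decide : ¬ (1 : ZMod 2) = 0)]
  have ey : ∀ j, FreeLieAlgebra.lift F s (yv F 2 j) = yv F 2 (ρ j) := by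
    intro j
    rw [yv, FreeLieAlgebra.lift_of_apply]
    simp [hsdef]
  have e2 : r.map (FreeLieAlgebra.lift F s) = r := by
    apply map_fix
    intro w hw
    obtain ⟨j, hj, rfl⟩ := hr w hw
    rw [ey j, hρ]
    simp only [if_pos hj]
  have e3 : ∀ (c : List ℕ) (o' : ℕ), o ≤ o' →
      (yblock F 2 o' c).map (FreeLieAlgebra.lift F s) = yblock F 2 (o' + 1) c := by
    intro c
    induction c with
    | nil => intro o' _; simp [yblock]
    | cons a c ih =>
        intro o' ho'
        have hno : ¬ o' < o := by omega
        rw [yblock, yblock, List.map_append, List.map_replicate, ey o']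
        simp only [hρ, if_neg hno]
        rw [ih (o' + 1) (by omega)]
  rw [List.map_append, e1, e2, e3 c o le_rfl] at h2
  exact h2

end TId

section Main
variable {F : Type} [Field F]

lemma yblock_nil (o : ℕ) : yblock F 2 o [] = [] := rfl
lemma yblock_cons (o a : ℕ) (c : List ℕ) :
    yblock F 2 o (a :: c) = List.replicate a (yv F 2 o) ++ yblock F 2 (o + 1) c := rfl

lemma YL_yblock (c : List ℕ) (o : ℕ) : ∀ w ∈ yblock F 2 o c, ∃ j, w = yv F 2 j :=
  fun w hw => (yblock_mem hw).elim fun j hj => ⟨j, hj.2⟩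

variable (J : LieIdeal F (FreeGLie F 2))
  (hI : gradedId F 2 ⊆ ↑J)
  (hs : ∀ s, IsGradedSubst F 2 s → ∀ x ∈ (J : Set (FreeGLie F 2)),
    FreeLieAlgebra.lift F s x ∈ (J : Set (FreeGLie F 2)))

include hI hs in
lemma T_app (c : List ℕ) : ∀ (o : ℕ) (r : List (FreeGLie F 2)),
    (∀ w ∈ r, ∃ j, j < o ∧ w = yv F 2 j) → brfold (zvr F) r ∈ J →
    brfold (zvr F) (r ++ yblock F 2 o c) ∈ J := by
  induction c with
  | nil => intro o r _ h; rw [yblock_nil, List.append_nil]; exact h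
  | cons a c ih =>
      intro o r hr h
      have hYr : ∀ w ∈ r, ∃ j, w = yv F 2 j := fun w hw => (hr w hw).elim fun j hj => ⟨j, hj.2⟩
      have h1 : brfold (zvr F) (List.replicate a (yv F 2 o) ++ r) ∈ J :=
        T_replicate J hI hs a o hYr h
      have hY1 : ∀ w ∈ List.replicate a (yv F 2 o) ++ r, ∃ j, w = yv F 2 j := by
        intro w hw
        rcases List.mem_append.1 hw with hw | hw
        · exact ⟨o, List.eq_of_mem_replicate hw⟩
        · exact hYr w hw
      have h2 : brfold (zvr F) (r ++ List.replicate a (yv F 2 o)) ∈ J :=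
        T_perm J hI _ List.perm_append_comm hY1 h1
      have hr' : ∀ w ∈ r ++ List.replicate a (yv F 2 o), ∃ j, j < o + 1 ∧ w = yv F 2 j := by
        intro w hw
        rcases List.mem_append.1 hw with hw | hw
        · obtain ⟨j, hj, e⟩ := hr w hw; exact ⟨j, by omega, e⟩
        · exact ⟨o, by omega, List.eq_of_mem_replicate hw⟩
      have h3 := ih (o + 1) (r ++ List.replicate a (yv F 2 o)) hr' h2
      rw [yblock_cons, ← List.append_assoc]
      exact h3

include hI hs in
lemma T_main {a b : List ℕ} (hab : List.SublistForall₂ (· ≤ ·) a b) :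
    ∀ (o : ℕ) (r : List (FreeGLie F 2)), (∀ w ∈ r, ∃ j, j < o ∧ w = yv F 2 j) →
    brfold (zvr F) (r ++ yblock F 2 o a) ∈ J → brfold (zvr F) (r ++ yblock F 2 o b) ∈ J := by
  induction hab with
  | nil =>
      intro o r hr h
      rw [yblock_nil, List.append_nil] at h
      exact T_app J hI hs _ o r hr h
  | @cons a₁ a₂ l₁ l₂ h12 htl ih =>
      intro o r hr h
      have hYr : ∀ w ∈ r, ∃ j, w = yv F 2 j := fun w hw => (hr w hw).elim fun j hj => ⟨j, hj.2⟩
      have hYfull : ∀ w ∈ r ++ yblock F 2 o (a₁ :: l₁), ∃ j, w = yv F 2 j := by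
        intro w hw
        rcases List.mem_append.1 hw with hw | hw
        · exact hYr w hw
        · exact YL_yblock _ _ w hw
      have h1 : brfold (zvr F)
          (List.replicate (a₂ - a₁) (yv F 2 o) ++ (r ++ yblock F 2 o (a₁ :: l₁))) ∈ J :=
        T_replicate J hI hs (a₂ - a₁) o hYfull h
      have hperm : (List.replicate (a₂ - a₁) (yv F 2 o) ++ (r ++ yblock F 2 o (a₁ :: l₁))).Perm
          ((r ++ List.replicate a₂ (yv F 2 o)) ++ yblock F 2 (o + 1) l₁) := by
        rw [yblock_cons, ← Multiset.coe_eq_coe]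
        simp only [← Multiset.coe_add, Multiset.coe_replicate]
        have hrep : Multiset.replicate (a₂ - a₁) (yv F 2 o) + Multiset.replicate a₁ (yv F 2 o)
            = Multiset.replicate a₂ (yv F 2 o) := by
          rw [← Multiset.replicate_add]; congr 1; omega
        rw [← hrep]
        abel
      have hY1 : ∀ w ∈ List.replicate (a₂ - a₁) (yv F 2 o) ++ (r ++ yblock F 2 o (a₁ :: l₁)),
          ∃ j, w = yv F 2 j := by
        intro w hw
        rcases List.mem_append.1 hw with hw | hw
        · exact ⟨o, List.eq_of_mem_replicate hw⟩
        · exact hYfull w hw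
      have h2 := T_perm J hI _ hperm hY1 h1
      have hr' : ∀ w ∈ r ++ List.replicate a₂ (yv F 2 o), ∃ j, j < o + 1 ∧ w = yv F 2 j := by
        intro w hw
        rcases List.mem_append.1 hw with hw | hw
        · obtain ⟨j, hj, e⟩ := hr w hw; exact ⟨j, by omega, e⟩
        · exact ⟨o, by omega, List.eq_of_mem_replicate hw⟩
      have h3 := ih (o + 1) (r ++ List.replicate a₂ (yv F 2 o)) hr' h2
      rw [yblock_cons, ← List.append_assoc]
      exact h3
  | @cons_right a₂ l₁ l₂ htl ih =>
      intro o r hr h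
      have h1 := T_shift J hs o hr l₁ h
      have h2 := ih (o + 1) r
        (fun w hw => (hr w hw).elim fun j hj => ⟨j, by omega, hj.2⟩) h1
      have hYfull : ∀ w ∈ r ++ yblock F 2 (o + 1) l₂, ∃ j, w = yv F 2 j := by
        intro w hw
        rcases List.mem_append.1 hw with hw | hw
        · exact (hr w hw).elim fun j hj => ⟨j, hj.2⟩
        · exact YL_yblock _ _ w hw
      have h3 : brfold (zvr F)
          (List.replicate a₂ (yv F 2 o) ++ (r ++ yblock F 2 (o + 1) l₂)) ∈ J :=
        T_replicate J hI hs a₂ o hYfull h2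
      have hperm : (List.replicate a₂ (yv F 2 o) ++ (r ++ yblock F 2 (o + 1) l₂)).Perm
          (r ++ (List.replicate a₂ (yv F 2 o) ++ yblock F 2 (o + 1) l₂)) := by
        rw [← Multiset.coe_eq_coe]
        simp only [← Multiset.coe_add, Multiset.coe_replicate]
        abel
      have hY3 : ∀ w ∈ List.replicate a₂ (yv F 2 o) ++ (r ++ yblock F 2 (o + 1) l₂),
          ∃ j, w = yv F 2 j := by
        intro w hw
        rcases List.mem_append.1 hw with hw | hw
        · exact ⟨o, List.eq_of_mem_replicate hw⟩
        · exact hYfull w hw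
      have h4 := T_perm J hI _ hperm hY3 h3
      rw [yblock_cons]
      exact h4

end Main


/-- If `f = [z, a₁y₁,…,aₘyₘ]` and `g = [z, a'₁y₁,…,a'ₘyₘ]` lie in `B`
and `V_f ≤ V_g` in the Higman order, then `g` is a consequence of `f` modulo the ideal
`I` of `ZMod 2`-graded identities of `UT₂(F)⁽⁻⁾`. -/
theorem stmt0 (F : Type) [Field F] [Infinite F] (a b : List ℕ)
    (ha₀ : a ≠ []) (ha : ∀ x ∈ a, 0 < x) (hb₀ : b ≠ []) (hb : ∀ x ∈ b, 0 < x)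
    (hab : List.SublistForall₂ (· ≤ ·) a b) :
    Bel F b ∈ TClosure F 2 ({Bel F a} ∪ gradedId F 2) := by
  rw [TClosure, Set.mem_sInter]
  rintro T ⟨⟨⟨J, rfl⟩, hsub⟩, hST⟩
  have hI : gradedId F 2 ⊆ (J : Set (FreeGLie F 2)) := fun x hx =>
    hST (Set.mem_union_right _ hx)
  have hf : Bel F a ∈ (J : Set (FreeGLie F 2)) :=
    hST (Set.mem_union_left _ (Set.mem_singleton _))
  have hf' : brfold (zvr F) ([] ++ yblock F 2 0 a) ∈ J := hf
  have h0 := T_main J hI hsub hab 0 [] (by simp) hf'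
  exact h0
end

section
/- Let F be an infinite field and let I = T_{Z_2}(UT_2(F)^{(-)}) be the ideal of Z_2-graded identities of UT_2(F)^{(-)} with its canonical Z_2-grading. Then every T_{Z_2}-ideal J of the free Z_2-graded Lie algebra with I ⊆ J is finitely generated as a T_{Z_2}-ideal; in particular T_{Z_2}(UT_2(F)^{(-)}) has the Specht property. -/
open FreeLieAlgebra

attribute [local instance 100] LieRing.ofAssociativeRing

namespace SpechtAux

open FreeLieAlgebra

variable (F : Type) [Field F]

/-- The degree-1 variable `z_i`. -/
noncomputable def zv (i : ℕ) : FreeGLie F 2 := FreeLieAlgebra.of F ((1 : ZMod 2), i)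

/-- Left-normed word `[z_i, y_{l_1}, …, y_{l_k}]`. -/
noncomputable def Wl (i : ℕ) (l : List ℕ) : FreeGLie F 2 :=
  lnw F 2 (zv F i) (l.map (yv F 2))

/-- Canonical word attached to a multiset of `y`-indices. -/
noncomputable def Wm (i : ℕ) (μ : Multiset ℕ) : FreeGLie F 2 :=
  Wl F i (μ.sort (· ≤ ·))

noncomputable def f1 : FreeGLie F 2 := ⁅yv F 2 0, yv F 2 1⁆
noncomputable def f2 : FreeGLie F 2 := ⁅zv F 0, zv F 1⁆

/-- index data for canonical basis words -/
abbrev D := ℕ ⊕ ℕ × Multiset ℕ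

noncomputable def toLie : D → FreeGLie F 2
  | .inl i => yv F 2 i
  | .inr (i, μ) => Wm F i μ

section TIdeal

variable {F}
variable {T : Set (FreeGLie F 2)}

theorem IsT.zero (hT : IsTIdeal F 2 T) : (0 : FreeGLie F 2) ∈ T := by
  obtain ⟨K, rfl⟩ := hT.isIdeal; exact K.zero_mem

theorem IsT.add (hT : IsTIdeal F 2 T) {a b : FreeGLie F 2} (ha : a ∈ T) (hb : b ∈ T) : a + b ∈ T := by
  obtain ⟨K, rfl⟩ := hT.isIdeal; exact K.add_mem ha hb

theorem IsT.smul (hT : IsTIdeal F 2 T) (c : F) {a : FreeGLie F 2} (ha : a ∈ T) : c • a ∈ T := by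
  obtain ⟨K, rfl⟩ := hT.isIdeal; exact K.smul_mem c ha

theorem IsT.neg (hT : IsTIdeal F 2 T) {a : FreeGLie F 2} (ha : a ∈ T) : -a ∈ T := by
  have := IsT.smul hT (-1 : F) ha; rwa [neg_one_smul] at this

theorem IsT.sub (hT : IsTIdeal F 2 T) {a b : FreeGLie F 2} (ha : a ∈ T) (hb : b ∈ T) : a - b ∈ T := by
  rw [sub_eq_add_neg]; exact IsT.add hT ha (IsT.neg hT hb)

theorem IsT.lie_right (hT : IsTIdeal F 2 T) (x : FreeGLie F 2) {a : FreeGLie F 2} (ha : a ∈ T) : ⁅x, a⁆ ∈ T := by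
  obtain ⟨K, rfl⟩ := hT.isIdeal; exact K.lie_mem ha

theorem IsT.lie_left (hT : IsTIdeal F 2 T) (x : FreeGLie F 2) {a : FreeGLie F 2} (ha : a ∈ T) : ⁅a, x⁆ ∈ T := by
  rw [← lie_skew]; exact IsT.neg hT (IsT.lie_right hT x ha)

theorem IsT.sum (hT : IsTIdeal F 2 T) {ι : Type*} (s : Finset ι) (f : ι → FreeGLie F 2)
    (h : ∀ i ∈ s, f i ∈ T) : (∑ i ∈ s, f i) ∈ T := by
  classical
  induction s using Finset.induction with
  | empty => simpa using IsT.zero hT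
  | insert _ _ hx ih =>
    rw [Finset.sum_insert hx]
    exact IsT.add hT (h _ (Finset.mem_insert_self _ _))
      (ih fun i hi => h i (Finset.mem_insert_of_mem hi))

end TIdeal

section TClos

variable {F}

theorem mem_TClosure_iff {S : Set (FreeGLie F 2)} {x : FreeGLie F 2} :
    x ∈ TClosure F 2 S ↔ ∀ T : Set (FreeGLie F 2), IsTIdeal F 2 T → S ⊆ T → x ∈ T := by
  simp [TClosure, Set.mem_sInter, Set.mem_setOf_eq, and_imp]

theorem TClosure_subset {S T : Set (FreeGLie F 2)} (hT : IsTIdeal F 2 T) (hST : S ⊆ T) :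
    TClosure F 2 S ⊆ T :=
  fun _ hx => (mem_TClosure_iff.1 hx) T hT hST

theorem subset_TClosure (S : Set (FreeGLie F 2)) : S ⊆ TClosure F 2 S :=
  fun _ hx => mem_TClosure_iff.2 fun _ _ hST => hST hx

theorem TC.zero (S : Set (FreeGLie F 2)) : (0 : FreeGLie F 2) ∈ TClosure F 2 S :=
  mem_TClosure_iff.2 fun _ hT _ => IsT.zero hT

theorem TC.add {S : Set (FreeGLie F 2)} {a b : FreeGLie F 2}
    (ha : a ∈ TClosure F 2 S) (hb : b ∈ TClosure F 2 S) : a + b ∈ TClosure F 2 S :=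
  mem_TClosure_iff.2 fun _ hT hS =>
    IsT.add hT (mem_TClosure_iff.1 ha _ hT hS) (mem_TClosure_iff.1 hb _ hT hS)

theorem TC.smul {S : Set (FreeGLie F 2)} (c : F) {a : FreeGLie F 2}
    (ha : a ∈ TClosure F 2 S) : c • a ∈ TClosure F 2 S :=
  mem_TClosure_iff.2 fun _ hT hS => IsT.smul hT c (mem_TClosure_iff.1 ha _ hT hS)

theorem TC.neg {S : Set (FreeGLie F 2)} {a : FreeGLie F 2}
    (ha : a ∈ TClosure F 2 S) : -a ∈ TClosure F 2 S :=
  mem_TClosure_iff.2 fun _ hT hS => IsT.neg hT (mem_TClosure_iff.1 ha _ hT hS)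

theorem TC.lie_right {S : Set (FreeGLie F 2)} (x : FreeGLie F 2) {a : FreeGLie F 2}
    (ha : a ∈ TClosure F 2 S) : ⁅x, a⁆ ∈ TClosure F 2 S :=
  mem_TClosure_iff.2 fun _ hT hS => IsT.lie_right hT x (mem_TClosure_iff.1 ha _ hT hS)

theorem TC.lie_left {S : Set (FreeGLie F 2)} (x : FreeGLie F 2) {a : FreeGLie F 2}
    (ha : a ∈ TClosure F 2 S) : ⁅a, x⁆ ∈ TClosure F 2 S :=
  mem_TClosure_iff.2 fun _ hT hS => IsT.lie_left hT x (mem_TClosure_iff.1 ha _ hT hS)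

theorem TC.subst {S : Set (FreeGLie F 2)} (s : ZMod 2 × ℕ → FreeGLie F 2)
    (hs : IsGradedSubst F 2 s) {a : FreeGLie F 2}
    (ha : a ∈ TClosure F 2 S) : FreeLieAlgebra.lift F s a ∈ TClosure F 2 S :=
  mem_TClosure_iff.2 fun _ hT hS => hT.substClosed s hs _ (mem_TClosure_iff.1 ha _ hT hS)

end TClos

end SpechtAux

namespace SpechtAux

open FreeLieAlgebra

variable (F : Type) [Field F]

theorem of_mem_homComp (g : ZMod 2) (i : ℕ) :
    FreeLieAlgebra.of F (g, i) ∈ homComp F 2 g :=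
  Submodule.subset_span (HomWord.of g i)

theorem yv_mem_homComp (i : ℕ) : yv F 2 i ∈ homComp F 2 0 := of_mem_homComp F 0 i

theorem zv_mem_homComp (i : ℕ) : zv F i ∈ homComp F 2 1 := of_mem_homComp F 1 i

theorem lnw_append (x : FreeGLie F 2) (l l' : List (FreeGLie F 2)) :
    lnw F 2 x (l ++ l') = lnw F 2 (lnw F 2 x l) l' :=
  List.foldl_append ..

theorem lnw_cons (x a : FreeGLie F 2) (l : List (FreeGLie F 2)) :
    lnw F 2 x (a :: l) = lnw F 2 ⁅x, a⁆ l := rfl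

theorem Wl_cons (i : ℕ) (a : ℕ) (l : List ℕ) :
    Wl F i (a :: l) = lnw F 2 ⁅zv F i, yv F 2 a⁆ (l.map (yv F 2)) := rfl

theorem Wl_append_single (i : ℕ) (l : List ℕ) (a : ℕ) :
    Wl F i (l ++ [a]) = ⁅Wl F i l, yv F 2 a⁆ := by
  unfold Wl
  rw [List.map_append, lnw_append]
  rfl

theorem Wl_homWord (i : ℕ) (l : List ℕ) : HomWord F 2 1 (Wl F i l) := by
  induction l using List.reverseRecOn with
  | nil => exact HomWord.of 1 i
  | append_singleton l a ih =>
    rw [Wl_append_single]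
    have h := HomWord.bracket (F := F) ih (HomWord.of 0 a)
    simpa [yv] using h

theorem Wl_mem_homComp (i : ℕ) (l : List ℕ) : Wl F i l ∈ homComp F 2 1 :=
  Submodule.subset_span (Wl_homWord F i l)

theorem Wm_mem_homComp (i : ℕ) (μ : Multiset ℕ) : Wm F i μ ∈ homComp F 2 1 :=
  Wl_mem_homComp F i _

/-- master computation of `lift` on a left-normed word over images -/
theorem lift_lnw (s : ZMod 2 × ℕ → FreeGLie F 2) (x : FreeGLie F 2) (l : List (FreeGLie F 2)) :
    FreeLieAlgebra.lift F s (lnw F 2 x l) =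
      lnw F 2 (FreeLieAlgebra.lift F s x) (l.map (FreeLieAlgebra.lift F s)) := by
  induction l generalizing x with
  | nil => rfl
  | cons a l ih =>
    rw [lnw_cons, List.map_cons, lnw_cons, ih, LieHom.map_lie]

theorem lift_Wl (s : ZMod 2 × ℕ → FreeGLie F 2) (i : ℕ) (l : List ℕ) :
    FreeLieAlgebra.lift F s (Wl F i l) =
      lnw F 2 (s (1, i)) (l.map fun a => s (0, a)) := by
  unfold Wl
  rw [lift_lnw]
  congr 1
  · exact lift_of_apply ..
  · rw [List.map_map]
    exact List.map_congr_left fun a _ => by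
      simp only [Function.comp_apply]; exact lift_of_apply ..

/-- the substitution renaming `y`-variables along `σ` -/
noncomputable def ySubst (σ : ℕ → ℕ) : ZMod 2 × ℕ → FreeGLie F 2 :=
  fun p => if p.1 = 0 then yv F 2 (σ p.2) else FreeLieAlgebra.of F p

theorem ySubst_graded (σ : ℕ → ℕ) : IsGradedSubst F 2 (ySubst F σ) := by
  intro g i
  unfold ySubst
  by_cases h : g = 0
  · subst h; simpa using yv_mem_homComp F (σ i)
  · simpa [h] using of_mem_homComp F g i

theorem lift_ySubst_Wl (σ : ℕ → ℕ) (i : ℕ) (l : List ℕ) :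
    FreeLieAlgebra.lift F (ySubst F σ) (Wl F i l) = Wl F i (l.map σ) := by
  rw [lift_Wl]
  unfold Wl
  have h1 : ySubst F σ (1, i) = zv F i := by
    unfold ySubst; rw [if_neg (by decide : ¬((1:ZMod 2) = 0))]; rfl
  rw [h1]
  congr 1
  rw [List.map_map]
  exact List.map_congr_left fun a _ => by unfold ySubst; simp

/-- the substitution sending every `z`-variable to a fixed odd element `u`,
keeping the `y`'s -/
noncomputable def zSubst (u : FreeGLie F 2) : ZMod 2 × ℕ → FreeGLie F 2 :=
  fun p => if p.1 = 1 then u else FreeLieAlgebra.of F p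

theorem zSubst_graded (u : FreeGLie F 2) (hu : u ∈ homComp F 2 1) :
    IsGradedSubst F 2 (zSubst F u) := by
  intro g i
  unfold zSubst
  by_cases h : g = 1
  · subst h; simpa using hu
  · simpa [h] using of_mem_homComp F g i

theorem lift_zSubst_Wl (u : FreeGLie F 2) (i : ℕ) (l : List ℕ) :
    FreeLieAlgebra.lift F (zSubst F u) (Wl F i l) = lnw F 2 u (l.map (yv F 2)) := by
  rw [lift_Wl]
  have h1 : zSubst F u (1, i) = u := by unfold zSubst; simp
  rw [h1]
  congr 1

/-- substitution with chosen values on two even variables -/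
noncomputable def eeSubst (a b : FreeGLie F 2) : ZMod 2 × ℕ → FreeGLie F 2 :=
  fun p => if p = (0, 0) then a else if p = (0, 1) then b else FreeLieAlgebra.of F p

theorem eeSubst_graded (a b : FreeGLie F 2) (ha : a ∈ homComp F 2 0) (hb : b ∈ homComp F 2 0) :
    IsGradedSubst F 2 (eeSubst F a b) := by
  intro g i
  unfold eeSubst
  by_cases h1 : ((g, i) : ZMod 2 × ℕ) = (0, 0)
  · rw [if_pos h1]; obtain ⟨rfl, -⟩ := Prod.mk.injEq .. ▸ h1; exact ha
  · rw [if_neg h1]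
    by_cases h2 : ((g, i) : ZMod 2 × ℕ) = (0, 1)
    · rw [if_pos h2]; obtain ⟨rfl, -⟩ := Prod.mk.injEq .. ▸ h2; exact hb
    · rw [if_neg h2]; exact of_mem_homComp F g i

noncomputable def ooSubst (a b : FreeGLie F 2) : ZMod 2 × ℕ → FreeGLie F 2 :=
  fun p => if p = (1, 0) then a else if p = (1, 1) then b else FreeLieAlgebra.of F p

theorem ooSubst_graded (a b : FreeGLie F 2) (ha : a ∈ homComp F 2 1) (hb : b ∈ homComp F 2 1) :
    IsGradedSubst F 2 (ooSubst F a b) := by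
  intro g i
  unfold ooSubst
  by_cases h1 : ((g, i) : ZMod 2 × ℕ) = (1, 0)
  · rw [if_pos h1]; obtain ⟨rfl, -⟩ := Prod.mk.injEq .. ▸ h1; exact ha
  · rw [if_neg h1]
    by_cases h2 : ((g, i) : ZMod 2 × ℕ) = (1, 1)
    · rw [if_pos h2]; obtain ⟨rfl, -⟩ := Prod.mk.injEq .. ▸ h2; exact hb
    · rw [if_neg h2]; exact of_mem_homComp F g i

variable {F}

/-- In any `T`-ideal containing `f1`, all brackets of two even elements lie in it. -/
theorem even_even {T : Set (FreeGLie F 2)} (hT : IsTIdeal F 2 T) (hf1 : f1 F ∈ T)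
    {a b : FreeGLie F 2} (ha : a ∈ homComp F 2 0) (hb : b ∈ homComp F 2 0) :
    ⁅a, b⁆ ∈ T := by
  have h := hT.substClosed _ (eeSubst_graded F a b ha hb) _ hf1
  have e : FreeLieAlgebra.lift F (eeSubst F a b) (f1 F) = ⁅a, b⁆ := by
    unfold f1 yv
    rw [LieHom.map_lie, lift_of_apply, lift_of_apply]
    unfold eeSubst
    rw [if_pos rfl, if_neg (by decide), if_pos rfl]
  rwa [e] at h

theorem odd_odd {T : Set (FreeGLie F 2)} (hT : IsTIdeal F 2 T) (hf2 : f2 F ∈ T)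
    {a b : FreeGLie F 2} (ha : a ∈ homComp F 2 1) (hb : b ∈ homComp F 2 1) :
    ⁅a, b⁆ ∈ T := by
  have h := hT.substClosed _ (ooSubst_graded F a b ha hb) _ hf2
  have e : FreeLieAlgebra.lift F (ooSubst F a b) (f2 F) = ⁅a, b⁆ := by
    unfold f2 zv
    rw [LieHom.map_lie, lift_of_apply, lift_of_apply]
    unfold ooSubst
    rw [if_pos rfl, if_neg (by decide), if_pos rfl]
  rwa [e] at h

end SpechtAux

namespace SpechtAux

open FreeLieAlgebra

variable {F : Type} [Field F]

theorem lnw_sub_mem {T : Set (FreeGLie F 2)} (hT : IsTIdeal F 2 T)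
    (l : List (FreeGLie F 2)) :
    ∀ u v : FreeGLie F 2, u - v ∈ T → lnw F 2 u l - lnw F 2 v l ∈ T := by
  induction l with
  | nil => intro u v h; exact h
  | cons a l ih =>
    intro u v h
    rw [lnw_cons, lnw_cons]
    exact ih _ _ (by rw [← sub_lie]; exact IsT.lie_left hT a h)

theorem W_perm {T : Set (FreeGLie F 2)} (hT : IsTIdeal F 2 T) (hf1 : f1 F ∈ T)
    {l l' : List ℕ} (h : l.Perm l') :
    ∀ x : FreeGLie F 2,
      lnw F 2 x (l.map (yv F 2)) - lnw F 2 x (l'.map (yv F 2)) ∈ T := by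
  induction h with
  | nil => intro x; simpa using IsT.zero hT
  | cons a _ ih =>
    intro x
    rw [List.map_cons, List.map_cons, lnw_cons, lnw_cons]
    exact ih _
  | swap a b l =>
    intro x
    simp only [List.map_cons, lnw_cons]
    refine lnw_sub_mem hT _ _ _ ?_
    have key : ⁅⁅x, yv F 2 b⁆, yv F 2 a⁆ - ⁅⁅x, yv F 2 a⁆, yv F 2 b⁆ =
        ⁅x, ⁅yv F 2 b, yv F 2 a⁆⁆ := by
      rw [leibniz_lie, ← lie_skew (yv F 2 b) ⁅x, yv F 2 a⁆]
      abel
    rw [key]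
    exact IsT.lie_right hT x
      (even_even hT hf1 (yv_mem_homComp F b) (yv_mem_homComp F a))
  | trans h12 h23 ih12 ih23 =>
    intro x
    have := IsT.add hT (ih12 x) (ih23 x)
    rwa [sub_add_sub_cancel] at this

theorem W_perm_mem {T : Set (FreeGLie F 2)} (hT : IsTIdeal F 2 T) (hf1 : f1 F ∈ T)
    {l l' : List ℕ} (h : l.Perm l') {i : ℕ} (hw : Wl F i l ∈ T) : Wl F i l' ∈ T := by
  have h2 := W_perm hT hf1 h (zv F i)
  have : Wl F i l' = Wl F i l - (Wl F i l - Wl F i l') := by abel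
  rw [this]
  exact IsT.sub hT hw h2

theorem Wm_index {T : Set (FreeGLie F 2)} (hT : IsTIdeal F 2 T)
    {i : ℕ} {μ : Multiset ℕ} (hw : Wm F i μ ∈ T) (j : ℕ) : Wm F j μ ∈ T := by
  have h := hT.substClosed _ (zSubst_graded F (zv F j) (zv_mem_homComp F j)) _ hw
  rwa [show Wm F i μ = Wl F i (μ.sort (· ≤ ·)) from rfl, lift_zSubst_Wl] at h

/-- reachability relation on multisets of `y`-indices -/
def Rrel (μ ν : Multiset ℕ) : Prop := ∃ σ : ℕ → ℕ, Multiset.map σ μ ≤ ν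

theorem Rstep {T : Set (FreeGLie F 2)} (hT : IsTIdeal F 2 T) (hf1 : f1 F ∈ T)
    {μ ν : Multiset ℕ} (h : Rrel μ ν) {i : ℕ} (hw : Wm F i μ ∈ T) (j : ℕ) :
    Wm F j ν ∈ T := by
  obtain ⟨σ, hle⟩ := h
  -- step 1 : rename the y's
  have h1 : Wl F i ((μ.sort (· ≤ ·)).map σ) ∈ T := by
    have := hT.substClosed _ (ySubst_graded F σ) _ hw
    rwa [show Wm F i μ = Wl F i (μ.sort (· ≤ ·)) from rfl, lift_ySubst_Wl] at this
  -- step 2 : sort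
  have hperm1 : ((μ.sort (· ≤ ·)).map σ).Perm ((μ.map σ).sort (· ≤ ·)) := by
    rw [← Multiset.coe_eq_coe, ← Multiset.map_coe, Multiset.sort_eq, Multiset.sort_eq]
  have h2 : Wm F i (μ.map σ) ∈ T := W_perm_mem hT hf1 hperm1 h1
  -- step 3 : prepend the complement
  set δ : Multiset ℕ := ν - μ.map σ with hδ
  have h3 : Wl F i ((δ.sort (· ≤ ·)) ++ ((μ.map σ).sort (· ≤ ·))) ∈ T := by
    have := hT.substClosed _
      (zSubst_graded F (Wm F i δ) (Wm_mem_homComp F i δ)) _ h2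
    rw [show Wm F i (μ.map σ) = Wl F i ((μ.map σ).sort (· ≤ ·)) from rfl,
      lift_zSubst_Wl] at this
    rwa [show Wl F i ((δ.sort (· ≤ ·)) ++ ((μ.map σ).sort (· ≤ ·))) =
      lnw F 2 (Wm F i δ) (((μ.map σ).sort (· ≤ ·)).map (yv F 2)) by
        unfold Wl; rw [List.map_append, lnw_append]; rfl]
  -- step 4 : sort again
  have hperm2 : ((δ.sort (· ≤ ·)) ++ ((μ.map σ).sort (· ≤ ·))).Perm (ν.sort (· ≤ ·)) := by
    rw [← Multiset.coe_eq_coe, ← Multiset.coe_add, Multiset.sort_eq, Multiset.sort_eq,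
      Multiset.sort_eq]
    exact tsub_add_cancel_of_le hle
  have h4 : Wm F i ν ∈ T := W_perm_mem hT hf1 hperm2 h3
  exact Wm_index hT h4 j

end SpechtAux

namespace SpechtAux

open FreeLieAlgebra

variable (F : Type) [Field F]

theorem TClosure_isTIdeal (S : Set (FreeGLie F 2)) : IsTIdeal F 2 (TClosure F 2 S) := by
  refine ⟨⟨{ carrier := TClosure F 2 S,
             add_mem' := fun ha hb => TC.add ha hb,
             zero_mem' := TC.zero S,
             smul_mem' := fun c x hx => TC.smul c hx,
             lie_mem := fun {x m} hm => TC.lie_right x hm }, rfl⟩,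
    fun s hs x hx => TC.subst s hs hx⟩

/-- the span of the canonical words -/
noncomputable def Nsp : Submodule F (FreeGLie F 2) :=
  Submodule.span F (Set.range (toLie F))

/-- the `TClosure` of the two defining identities -/
def C0 : Set (FreeGLie F 2) := TClosure F 2 {f1 F, f2 F}

theorem hC0 : IsTIdeal F 2 (C0 F) := TClosure_isTIdeal F _

theorem f1_mem_C0 : f1 F ∈ C0 F := subset_TClosure _ (by simp)

theorem f2_mem_C0 : f2 F ∈ C0 F := subset_TClosure _ (by simp)

/-- normal-form predicate -/
def NN : Set (FreeGLie F 2) := {x | ∃ nf ∈ Nsp F, x - nf ∈ C0 F}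

variable {F}

theorem NN_zero : (0 : FreeGLie F 2) ∈ NN F :=
  ⟨0, Submodule.zero_mem _, by simpa using IsT.zero (hC0 F)⟩

theorem NN_add {a b : FreeGLie F 2} (ha : a ∈ NN F) (hb : b ∈ NN F) : a + b ∈ NN F := by
  obtain ⟨n, hn, hc⟩ := ha
  obtain ⟨m, hm, hc'⟩ := hb
  refine ⟨n + m, Submodule.add_mem _ hn hm, ?_⟩
  have := IsT.add (hC0 F) hc hc'
  rwa [show a - n + (b - m) = a + b - (n + m) by abel] at this

theorem NN_smul (c : F) {a : FreeGLie F 2} (ha : a ∈ NN F) : c • a ∈ NN F := by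
  obtain ⟨n, hn, hc⟩ := ha
  refine ⟨c • n, Submodule.smul_mem _ c hn, ?_⟩
  have := IsT.smul (hC0 F) c hc
  rwa [smul_sub] at this

theorem toLie_mem_NN (d : D) : toLie F d ∈ NN F :=
  ⟨toLie F d, Submodule.subset_span ⟨d, rfl⟩, by simpa using IsT.zero (hC0 F)⟩

theorem toLie_mem_homComp :
    ∀ d : D, toLie F d ∈ homComp F 2 0 ∨ toLie F d ∈ homComp F 2 1
  | .inl i => Or.inl (yv_mem_homComp F i)
  | .inr (i, μ) => Or.inr (Wm_mem_homComp F i μ)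

theorem cons_sort_perm (i : ℕ) (μ : Multiset ℕ) :
    ((μ.sort (· ≤ ·)) ++ [i]).Perm ((i ::ₘ μ).sort (· ≤ ·)) := by
  rw [← Multiset.coe_eq_coe, ← Multiset.coe_add, Multiset.sort_eq, Multiset.sort_eq,
    Multiset.coe_singleton, add_comm, Multiset.singleton_add]

theorem lie_W_y (j : ℕ) (μ : Multiset ℕ) (i : ℕ) :
    ⁅Wm F j μ, yv F 2 i⁆ - Wm F j (i ::ₘ μ) ∈ C0 F := by
  rw [show ⁅Wm F j μ, yv F 2 i⁆ = Wl F j ((μ.sort (· ≤ ·)) ++ [i]) from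
    (Wl_append_single F j _ i).symm]
  exact W_perm (hC0 F) (f1_mem_C0 F) (cons_sort_perm i μ) (zv F j)

theorem base_brk (d e : D) : ⁅toLie F d, toLie F e⁆ ∈ NN F := by
  match d, e with
  | .inl i, .inl j =>
    exact ⟨0, Submodule.zero_mem _, by
      simpa [toLie] using even_even (hC0 F) (f1_mem_C0 F) (yv_mem_homComp F i) (yv_mem_homComp F j)⟩
  | .inr (j, μ), .inl i =>
    refine ⟨toLie F (.inr (j, i ::ₘ μ)), Submodule.subset_span ⟨_, rfl⟩, ?_⟩
    exact lie_W_y j μ i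
  | .inl i, .inr (j, μ) =>
    refine ⟨-toLie F (.inr (j, i ::ₘ μ)),
      Submodule.neg_mem _ (Submodule.subset_span ⟨_, rfl⟩), ?_⟩
    have h := IsT.neg (hC0 F) (lie_W_y j μ i)
    rwa [show -(⁅Wm F j μ, yv F 2 i⁆ - Wm F j (i ::ₘ μ)) =
      ⁅yv F 2 i, Wm F j μ⁆ - - Wm F j (i ::ₘ μ) by rw [← lie_skew]; abel] at h
  | .inr (i, μ), .inr (j, ν) =>
    exact ⟨0, Submodule.zero_mem _, by
      simpa [toLie] using odd_odd (hC0 F) (f2_mem_C0 F) (Wm_mem_homComp F i μ) (Wm_mem_homComp F j ν)⟩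

theorem lie_span_NN {u v : FreeGLie F 2} (hu : u ∈ Nsp F) (hv : v ∈ Nsp F) :
    ⁅u, v⁆ ∈ NN F := by
  induction hu using Submodule.span_induction with
  | mem x hx =>
    obtain ⟨d, rfl⟩ := hx
    induction hv using Submodule.span_induction with
    | mem y hy => obtain ⟨e, rfl⟩ := hy; exact base_brk d e
    | zero => simpa using NN_zero
    | add a b _ _ ha hb => rw [lie_add]; exact NN_add ha hb
    | smul c a _ ha => rw [lie_smul]; exact NN_smul c ha
  | zero => simpa using NN_zero
  | add a b _ _ ha hb => rw [add_lie]; exact NN_add ha hb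
  | smul c a _ ha => rw [smul_lie]; exact NN_smul c ha

theorem NN_lie {a b : FreeGLie F 2} (ha : a ∈ NN F) (hb : b ∈ NN F) : ⁅a, b⁆ ∈ NN F := by
  obtain ⟨n, hn, hc⟩ := ha
  obtain ⟨m, hm, hc'⟩ := hb
  obtain ⟨p, hp, hq⟩ := lie_span_NN hn hm
  refine ⟨p, hp, ?_⟩
  have h1 : ⁅a - n, b⁆ ∈ C0 F := IsT.lie_left (hC0 F) b hc
  have h2 : ⁅n, b - m⁆ ∈ C0 F := IsT.lie_right (hC0 F) n hc'
  have := IsT.add (hC0 F) (IsT.add (hC0 F) h1 h2) hq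
  rwa [show ⁅a - n, b⁆ + ⁅n, b - m⁆ + (⁅n, m⁆ - p) = ⁅a, b⁆ - p by
    rw [sub_lie, lie_sub]; abel] at this

theorem of_mem_NN (p : ZMod 2 × ℕ) : FreeLieAlgebra.of F p ∈ NN F := by
  obtain ⟨g, i⟩ := p
  have hg : ∀ h : ZMod 2, h = 0 ∨ h = 1 := by decide
  rcases hg g with rfl | rfl
  · exact toLie_mem_NN (.inl i)
  · have : FreeLieAlgebra.of F ((1 : ZMod 2), i) = toLie F (.inr (i, 0)) := by
      show _ = Wm F i 0
      unfold Wm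
      rw [Multiset.sort_zero]
      rfl
    rw [this]
    exact toLie_mem_NN _

/-- the normal-form subalgebra -/
noncomputable def NNsub : LieSubalgebra F (FreeGLie F 2) where
  carrier := NN F
  add_mem' := fun ha hb => NN_add ha hb
  zero_mem' := NN_zero
  smul_mem' := fun c x hx => NN_smul c hx
  lie_mem' := fun ha hb => NN_lie ha hb

/-- Every element of the free graded Lie algebra has a normal form. -/
theorem normal_form (x : FreeGLie F 2) : x ∈ NN F := by
  let into : FreeGLie F 2 →ₗ⁅F⁆ (NNsub : LieSubalgebra F (FreeGLie F 2)) :=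
    FreeLieAlgebra.lift F (fun p => ⟨FreeLieAlgebra.of F p, of_mem_NN p⟩)
  have heq : (NNsub : LieSubalgebra F (FreeGLie F 2)).incl.comp into =
      (LieHom.id : FreeGLie F 2 →ₗ⁅F⁆ FreeGLie F 2) := by
    apply FreeLieAlgebra.hom_ext
    intro p
    simp [into, lift_of_apply]
  have hx : (NNsub : LieSubalgebra F (FreeGLie F 2)).incl (into x) = x :=
    DFunLike.congr_fun heq x
  rw [← hx]
  exact (into x).2

end SpechtAux

namespace SpechtAux

open FreeLieAlgebra

variable (F : Type) [Field F]

/-- scaling substitution -/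
noncomputable def scSubst (t : ZMod 2 × ℕ → F) : ZMod 2 × ℕ → FreeGLie F 2 :=
  fun p => t p • FreeLieAlgebra.of F p

theorem scSubst_graded (t : ZMod 2 × ℕ → F) : IsGradedSubst F 2 (scSubst F t) :=
  fun g i => Submodule.smul_mem _ _ (of_mem_homComp F g i)

/-- the character (monomial function) of a canonical word -/
noncomputable def chi (d : D) (t : ZMod 2 × ℕ → F) : F :=
  match d with
  | .inl i => t (0, i)
  | .inr (i, μ) => t (1, i) * (μ.map fun a => t (0, a)).prod

theorem lnw_smul_map (t : ZMod 2 × ℕ → F) :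
    ∀ (l : List ℕ) (x : FreeGLie F 2) (c : F),
      lnw F 2 (c • x) (l.map fun a => t (0, a) • yv F 2 a) =
        (c * (l.map fun a => t (0, a)).prod) • lnw F 2 x (l.map (yv F 2)) := by
  intro l
  induction l with
  | nil => intro x c; simp [lnw]
  | cons a l ih =>
    intro x c
    simp only [List.map_cons, List.prod_cons, lnw_cons]
    have : ⁅c • x, t (0, a) • yv F 2 a⁆ = (c * t (0, a)) • ⁅x, yv F 2 a⁆ := by
      simp only [smul_lie, LieAlgebra.lie_smul, smul_smul, mul_comm]
    rw [this, ih, mul_assoc]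

theorem lift_sc_toLie (t : ZMod 2 × ℕ → F) (d : D) :
    FreeLieAlgebra.lift F (scSubst F t) (toLie F d) = chi F d t • toLie F d := by
  match d with
  | .inl i =>
    show FreeLieAlgebra.lift F (scSubst F t) (FreeLieAlgebra.of F ((0 : ZMod 2), i)) = _
    rw [lift_of_apply]
    rfl
  | .inr (i, μ) =>
    show FreeLieAlgebra.lift F (scSubst F t) (Wl F i (μ.sort (· ≤ ·))) = _
    rw [lift_Wl]
    have h1 : scSubst F t (1, i) = t (1, i) • zv F i := rfl
    have h2 : ((μ.sort (· ≤ ·)).map fun a => scSubst F t (0, a)) =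
        ((μ.sort (· ≤ ·)).map fun a => t (0, a) • yv F 2 a) := rfl
    rw [h1, h2, lnw_smul_map]
    congr 1
    show t (1, i) * ((μ.sort (· ≤ ·)).map fun a => t (0, a)).prod = _
    rw [chi]
    congr 1
    rw [← Multiset.prod_coe, ← Multiset.map_coe, Multiset.sort_eq]

/-- multiset of `y`-indices as an exponent vector -/
noncomputable def cnt (μ : Multiset ℕ) : (ZMod 2 × ℕ) →₀ ℕ :=
  (μ.map fun a => Finsupp.single ((0 : ZMod 2), a) 1).sum

theorem cnt_zero : cnt 0 = 0 := rfl

theorem cnt_cons (a : ℕ) (μ : Multiset ℕ) :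
    cnt (a ::ₘ μ) = Finsupp.single ((0 : ZMod 2), a) 1 + cnt μ := by
  unfold cnt; rw [Multiset.map_cons, Multiset.sum_cons]

theorem cnt_apply0 (μ : Multiset ℕ) (a : ℕ) : cnt μ ((0 : ZMod 2), a) = μ.count a := by
  induction μ using Multiset.induction with
  | empty => simp [cnt_zero]
  | cons b μ ih =>
    rw [cnt_cons, Finsupp.add_apply, ih, Multiset.count_cons]
    by_cases h : b = a
    · subst h; simp [add_comm]
    · rw [Finsupp.single_apply, if_neg (by simp [h]), if_neg (Ne.symm h)]
      simp

theorem cnt_apply1 (μ : Multiset ℕ) (a : ℕ) : cnt μ ((1 : ZMod 2), a) = 0 := by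
  induction μ using Multiset.induction with
  | empty => simp [cnt_zero]
  | cons b μ ih =>
    have h10 : ((0 : ZMod 2), b) ≠ ((1 : ZMod 2), a) := by
      simp only [ne_eq, Prod.mk.injEq, not_and]
      intro hc; exact absurd hc (by decide)
    rw [cnt_cons, Finsupp.add_apply, ih, Finsupp.single_apply, if_neg h10]

theorem cnt_prod (t : ZMod 2 × ℕ → F) (μ : Multiset ℕ) :
    ((cnt μ).prod fun v e => t v ^ e) = (μ.map fun a => t (0, a)).prod := by
  induction μ using Multiset.induction with
  | empty => simp [cnt_zero]
  | cons b μ ih =>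
    rw [cnt_cons, Finsupp.prod_add_index' (fun a => pow_zero _)
      (fun a e1 e2 => pow_add _ _ _),
      Finsupp.prod_single_index (h := fun v e => t v ^ e) (pow_zero _), ih,
      Multiset.map_cons, Multiset.prod_cons, pow_one]

/-- exponent vector of a canonical word -/
noncomputable def expD : D → ((ZMod 2 × ℕ) →₀ ℕ)
  | .inl i => Finsupp.single ((0 : ZMod 2), i) 1
  | .inr (i, μ) => Finsupp.single ((1 : ZMod 2), i) 1 + cnt μ

theorem chi_eval (t : ZMod 2 × ℕ → F) (d : D) :
    chi F d t = MvPolynomial.eval t (MvPolynomial.monomial (expD d) (1 : F)) := by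
  rw [MvPolynomial.eval_monomial, one_mul]
  match d with
  | .inl i =>
    rw [chi, expD, Finsupp.prod_single_index (h := fun v e => t v ^ e) (pow_zero _), pow_one]
  | .inr (i, μ) =>
    rw [chi, expD, Finsupp.prod_add_index' (fun a => pow_zero _)
      (fun a e1 e2 => pow_add _ _ _),
      Finsupp.prod_single_index (h := fun v e => t v ^ e) (pow_zero _), pow_one, cnt_prod]

theorem expD_inj : Function.Injective expD := by
  have h01 : ¬ ((0 : ZMod 2) = 1) := by decide
  have h10 : ¬ ((1 : ZMod 2) = 0) := by decide
  intro d e h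
  match d, e with
  | .inl i, .inl j =>
    by_cases hne : j = i
    · rw [hne]
    · have := DFunLike.congr_fun h ((0 : ZMod 2), i)
      simp [expD, Finsupp.single_apply, hne] at this
  | .inl i, .inr (j, μ) =>
    have := DFunLike.congr_fun h ((1 : ZMod 2), j)
    simp [expD, Finsupp.single_apply, cnt_apply1, h01] at this
  | .inr (j, μ), .inl i =>
    have := DFunLike.congr_fun h ((1 : ZMod 2), j)
    simp [expD, Finsupp.single_apply, cnt_apply1, h01] at this
  | .inr (i, μ), .inr (j, ν) =>
    have hij : i = j := by
      by_contra hne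
      have := DFunLike.congr_fun h ((1 : ZMod 2), i)
      simp [expD, Finsupp.single_apply, cnt_apply1, Ne.symm hne] at this
    subst hij
    have hμν : μ = ν := by
      ext a
      have := DFunLike.congr_fun h ((0 : ZMod 2), a)
      simpa [expD, Finsupp.single_apply, cnt_apply0, h10] using this
    rw [hμν]

end SpechtAux

namespace SpechtAux

open FreeLieAlgebra

variable {F : Type} [Field F] [Infinite F]

theorem separation {J : Set (FreeGLie F 2)} (hJ : IsTIdeal F 2 J)
    (s : Finset D) (c : D → F)
    (h : (∑ d ∈ s, c d • toLie F d) ∈ J) :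
    ∀ d0 ∈ s, c d0 • toLie F d0 ∈ J := by
  classical
  intro d0 hd0
  set g : (ZMod 2 × ℕ → F) → ({x // x ∈ s} → F) := fun t d => chi F d.1 t with hg
  set ev : {x // x ∈ s} → ({x // x ∈ s} → F) :=
    fun d => fun e => if d = e then 1 else 0 with hev
  have hsum : ∀ (f : ({x // x ∈ s} → F) →ₗ[F] F) (v : {x // x ∈ s} → F),
      f v = ∑ d ∈ Finset.univ, v d * f (ev d) := by
    intro f v
    conv_lhs => rw [pi_eq_sum_univ v]
    rw [map_sum]
    exact Finset.sum_congr rfl fun d _ => by rw [map_smul, smul_eq_mul]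
  have hVtop : Submodule.span F (Set.range g) = ⊤ := by
    by_contra hne
    obtain ⟨f, hf0, hker⟩ :=
      Submodule.exists_dual_map_eq_bot_of_lt_top (lt_top_iff_ne_top.2 hne) inferInstance
    have hfV : ∀ v ∈ Submodule.span F (Set.range g), f v = 0 := by
      intro v hv
      have : f v ∈ (Submodule.span F (Set.range g)).map f := Submodule.mem_map_of_mem hv
      rw [hker] at this
      exact (Submodule.mem_bot F).1 this
    set p : MvPolynomial (ZMod 2 × ℕ) F :=
      ∑ d ∈ s.attach, MvPolynomial.monomial (expD d.1) (f (ev d)) with hp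
    have heval : ∀ t : ZMod 2 × ℕ → F, MvPolynomial.eval t p = f (g t) := by
      intro t
      rw [hp, map_sum, hsum f (g t), Finset.univ_eq_attach]
      apply Finset.sum_congr rfl
      intro d _
      rw [MvPolynomial.eval_monomial,
        show ((expD (d.1 : D)).prod fun n e => t n ^ e) = chi F d.1 t by
          rw [chi_eval, MvPolynomial.eval_monomial, one_mul]]
      exact mul_comm _ _
    have hpzero : p = 0 := by
      apply MvPolynomial.funext
      intro t
      rw [heval t, map_zero]
      exact hfV _ (Submodule.subset_span ⟨t, rfl⟩)
    have hcoeff : ∀ d1 : {x // x ∈ s}, f (ev d1) = 0 := by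
      intro d1
      have h1 : MvPolynomial.coeff (expD d1.1) p = f (ev d1) := by
        rw [hp, MvPolynomial.coeff_sum, Finset.sum_eq_single d1]
        · rw [MvPolynomial.coeff_monomial, if_pos rfl]
        · intro d _ hne
          rw [MvPolynomial.coeff_monomial,
            if_neg (fun hc => hne (Subtype.ext (expD_inj hc)))]
        · intro hmem; exact absurd (Finset.mem_attach _ _) hmem
      rw [hpzero, MvPolynomial.coeff_zero] at h1
      exact h1.symm
    apply hf0
    apply LinearMap.ext
    intro v
    rw [hsum f v]
    simp [hcoeff]
  have hmemV : ev ⟨d0, hd0⟩ ∈ Submodule.span F (Set.range g) := by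
    rw [hVtop]; trivial
  obtain ⟨α, hα⟩ := Finsupp.mem_span_range_iff_exists_finsupp.1 hmemV
  have hX : (∑ t ∈ α.support,
      α t • FreeLieAlgebra.lift F (scSubst F t) (∑ d ∈ s, c d • toLie F d)) ∈ J := by
    apply IsT.sum hJ
    intro t _
    exact IsT.smul hJ _ (hJ.substClosed _ (scSubst_graded F t) _ h)
  have hcoe : ∀ (d : D) (hd : d ∈ s),
      (∑ t ∈ α.support, α t * chi F d t) = (if d0 = d then (1 : F) else 0) := by
    intro d hd
    have h3 := congrFun hα ⟨d, hd⟩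
    rw [Finsupp.sum, Finset.sum_apply] at h3
    have h4 : (∑ t ∈ α.support, (α t • g t) ⟨d, hd⟩) = ∑ t ∈ α.support, α t * chi F d t :=
      Finset.sum_congr rfl fun t _ => by rw [Pi.smul_apply, smul_eq_mul]
    rw [h4] at h3
    rw [h3, hev]
    show (if (⟨d0, hd0⟩ : {x // x ∈ s}) = ⟨d, hd⟩ then (1 : F) else 0) = _
    by_cases hc : d0 = d
    · subst hc; rw [if_pos rfl, if_pos rfl]
    · rw [if_neg (by simp [hc]), if_neg hc]
  have hXeq : (∑ t ∈ α.support,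
      α t • FreeLieAlgebra.lift F (scSubst F t) (∑ d ∈ s, c d • toLie F d))
      = c d0 • toLie F d0 := by
    calc (∑ t ∈ α.support,
        α t • FreeLieAlgebra.lift F (scSubst F t) (∑ d ∈ s, c d • toLie F d))
        = ∑ t ∈ α.support, ∑ d ∈ s, (α t * chi F d t * c d) • toLie F d := by
          apply Finset.sum_congr rfl
          intro t _
          have e1 : FreeLieAlgebra.lift F (scSubst F t) (∑ d ∈ s, c d • toLie F d)
              = ∑ d ∈ s, (chi F d t * c d) • toLie F d := by
            rw [show (FreeLieAlgebra.lift F (scSubst F t)) (∑ d ∈ s, c d • toLie F d)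
              = (FreeLieAlgebra.lift F (scSubst F t)).toLinearMap
                  (∑ d ∈ s, c d • toLie F d) from rfl, map_sum]
            apply Finset.sum_congr rfl
            intro d _
            rw [map_smul]
            show c d • (FreeLieAlgebra.lift F (scSubst F t)) (toLie F d) = _
            rw [lift_sc_toLie, smul_smul, mul_comm]
          rw [e1, Finset.smul_sum]
          apply Finset.sum_congr rfl
          intro d _
          rw [smul_smul, ← mul_assoc]
      _ = ∑ d ∈ s, ((∑ t ∈ α.support, α t * chi F d t) * c d) • toLie F d := by
          rw [Finset.sum_comm]
          apply Finset.sum_congr rfl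
          intro d _
          rw [Finset.sum_mul, Finset.sum_smul]
      _ = ∑ d ∈ s, ((if d0 = d then (1 : F) else 0) * c d) • toLie F d := by
          apply Finset.sum_congr rfl
          intro d hd
          rw [hcoe d hd]
      _ = c d0 • toLie F d0 := by
          rw [Finset.sum_eq_single d0]
          · rw [if_pos rfl, one_mul]
          · intro d _ hne
            rw [if_neg (fun hc => hne hc.symm), zero_mul, zero_smul]
          · intro hm; exact absurd hd0 hm
  rw [hXeq] at hX
  exact hX

end SpechtAux

namespace SpechtAux

open Multiset

/-- support counts of a multiset -/
noncomputable def pc (μ : Multiset ℕ) : Multiset ℕ :=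
  μ.toFinset.val.map fun a => μ.count a

theorem rel_of_forall₂ {r : ℕ → ℕ → Prop} :
    ∀ {l l' : List ℕ}, List.Forall₂ r l l' → Multiset.Rel r ↑l ↑l' := by
  intro l l' h
  induction h with
  | nil => exact Multiset.Rel.zero
  | cons hab _ ih => exact Multiset.Rel.cons hab ih

theorem exists_map_of_le_map {f : ℕ → ℕ} :
    ∀ {s t : Multiset ℕ}, t ≤ s.map f → ∃ u, u ≤ s ∧ u.map f = t := by
  classical
  intro s
  induction s using Multiset.induction with
  | empty =>
    intro t h
    rw [Multiset.map_zero, Multiset.le_zero] at h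
    exact ⟨0, le_refl _, by simp [h]⟩
  | cons a s ih =>
    intro t h
    rw [Multiset.map_cons] at h
    by_cases hfa : f a ∈ t
    · have h1 : t.erase (f a) ≤ s.map f := by
        have := Multiset.erase_le_erase (f a) h
        rwa [Multiset.erase_cons_head] at this
      obtain ⟨u, hu, hmap⟩ := ih h1
      refine ⟨a ::ₘ u, Multiset.cons_le_cons a hu, ?_⟩
      rw [Multiset.map_cons, hmap, Multiset.cons_erase hfa]
    · have h1 : t ≤ s.map f := by
        rw [Multiset.le_iff_count]
        intro x
        have hx := Multiset.le_iff_count.1 h x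
        rw [Multiset.count_cons] at hx
        by_cases hxa : x = f a
        · subst hxa
          rw [Multiset.count_eq_zero_of_notMem hfa]
          exact Nat.zero_le _
        · simpa [hxa] using hx
      obtain ⟨u, hu, hmap⟩ := ih h1
      exact ⟨u, le_trans hu (Multiset.le_cons_self s a), hmap⟩

theorem rel_matching {P : ℕ → ℕ → Prop} :
    ∀ {s u : Multiset ℕ}, Multiset.Rel P s u → s.Nodup → u.Nodup →
      ∃ σ : ℕ → ℕ, Set.InjOn σ {a | a ∈ s} ∧ (∀ a ∈ s, P a (σ a)) ∧
        Multiset.map σ s = u := by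
  classical
  intro s u h
  induction h with
  | zero =>
    intro _ _
    exact ⟨id, by simp [Set.InjOn], by simp, by simp⟩
  | @cons a b as bs hab hrel ih =>
    intro hs hu
    rw [Multiset.nodup_cons] at hs hu
    obtain ⟨σ0, hinj, hP, hmap⟩ := ih hs.2 hu.2
    have hval : ∀ x ∈ as, σ0 x ∈ bs := by
      intro x hx
      rw [← hmap]
      exact Multiset.mem_map_of_mem σ0 hx
    refine ⟨fun x => if x = a then b else σ0 x, ?_, ?_, ?_⟩
    · intro x hx y hy hxy
      dsimp only at hxy
      simp only [Set.mem_setOf_eq, Multiset.mem_cons] at hx hy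
      rcases hx with rfl | hx <;> rcases hy with rfl | hy
      · rfl
      · exfalso
        rw [if_pos rfl, if_neg (fun hc : y = x => hs.1 (hc ▸ hy))] at hxy
        exact hu.1 (hxy ▸ hval y hy)
      · exfalso
        rw [if_pos rfl, if_neg (fun hc : x = y => hs.1 (hc ▸ hx))] at hxy
        exact hu.1 (hxy.symm ▸ hval x hx)
      · rw [if_neg (fun hc : x = a => hs.1 (hc ▸ hx)),
          if_neg (fun hc : y = a => hs.1 (hc ▸ hy))] at hxy
        exact hinj hx hy hxy
    · intro x hx
      dsimp only
      rcases Multiset.mem_cons.1 hx with rfl | hx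
      · rw [if_pos rfl]; exact hab
      · rw [if_neg (fun hc : x = a => hs.1 (hc ▸ hx))]
        exact hP x hx
    · rw [Multiset.map_cons, if_pos rfl]
      congr 1
      rw [Multiset.map_congr rfl fun x hx =>
        if_neg (fun hc : x = a => hs.1 (hc ▸ hx))]
      exact hmap

theorem map_count_le {μ ν : Multiset ℕ} (σ : ℕ → ℕ)
    (hinj : Set.InjOn σ {a | a ∈ μ}) (hcnt : ∀ a ∈ μ, μ.count a ≤ ν.count (σ a)) :
    Multiset.map σ μ ≤ ν := by
  classical
  rw [Multiset.le_iff_count]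
  intro b
  rw [Multiset.count_map]
  by_cases hex : ∃ a ∈ μ, σ a = b
  · obtain ⟨a0, ha0, rfl⟩ := hex
    have hfilter : μ.filter (fun a => σ a0 = σ a) = μ.filter (fun a => a = a0) := by
      apply Multiset.filter_congr
      intro x hx
      constructor
      · intro hxe; exact hinj hx ha0 hxe.symm
      · intro hxe; rw [hxe]
    rw [hfilter, Multiset.filter_eq', Multiset.card_replicate]
    exact hcnt a0 ha0
  · have hnil : μ.filter (fun a => b = σ a) = 0 :=
      Multiset.filter_eq_nil.2 fun a ha hba => hex ⟨a, ha, hba.symm⟩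
    rw [hnil]
    simp

theorem Rrel_of_sublistForall₂ {μ ν : Multiset ℕ}
    (h : List.SublistForall₂ (· ≤ ·) ((pc μ).sort (· ≤ ·)) ((pc ν).sort (· ≤ ·))) :
    Rrel μ ν := by
  classical
  obtain ⟨l, hf, hsub⟩ := List.sublistForall₂_iff.1 h
  have h1 : Multiset.Rel (· ≤ ·) (pc μ) ↑l := by
    have := rel_of_forall₂ hf
    rwa [Multiset.sort_eq] at this
  have h2 : (↑l : Multiset ℕ) ≤ pc ν := by
    have := Multiset.coe_le.2 hsub.subperm
    rwa [Multiset.sort_eq] at this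
  obtain ⟨u, hu, humap⟩ := exists_map_of_le_map (f := fun a => ν.count a) h2
  rw [← humap] at h1
  unfold pc at h1
  rw [Multiset.rel_map] at h1
  have hnu : u.Nodup := Multiset.nodup_of_le hu ν.toFinset.nodup
  obtain ⟨σ, hinj, hP, hmap⟩ := rel_matching h1 μ.toFinset.nodup hnu
  refine ⟨σ, map_count_le σ ?_ ?_⟩
  · intro x hx y hy hxy
    exact hinj (Multiset.mem_toFinset.2 hx) (Multiset.mem_toFinset.2 hy) hxy
  · intro a ha
    exact hP a (Multiset.mem_toFinset.2 ha)

theorem Rrel_pwo (f : ℕ → Multiset ℕ) : ∃ i j, i < j ∧ Rrel (f i) (f j) := by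
  have hN : (Set.univ : Set ℕ).PartiallyWellOrderedOn (· ≤ ·) :=
    (Set.isWF_univ_iff.2 inferInstance).isPWO
  have hH := Set.PartiallyWellOrderedOn.partiallyWellOrderedOn_sublistForall₂ (· ≤ ·) hN
  obtain ⟨i, j, hij, hsl⟩ := hH.exists_lt (f := fun n => (pc (f n)).sort (· ≤ ·)) (fun n => by simp)
  exact ⟨i, j, hij, Rrel_of_sublistForall₂ hsl⟩

theorem finite_basis (Λ : Set (Multiset ℕ)) :
    ∃ B : Finset (Multiset ℕ), ↑B ⊆ Λ ∧ ∀ μ ∈ Λ, ∃ ν ∈ B, Rrel ν μ := by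
  classical
  by_contra hcon
  push_neg at hcon
  have hstep : ∀ B : Finset (Multiset ℕ), (↑B : Set (Multiset ℕ)) ⊆ Λ →
      ∃ μ, μ ∈ Λ ∧ ∀ ν ∈ B, ¬ Rrel ν μ := by
    intro B hB
    obtain ⟨μ, hμ, hcond⟩ := hcon B hB
    exact ⟨μ, hμ, hcond⟩
  let chain : ℕ → {B : Finset (Multiset ℕ) // (↑B : Set (Multiset ℕ)) ⊆ Λ} :=
    fun n => Nat.rec ⟨∅, by simp⟩
      (fun _ prev => ⟨insert (hstep prev.1 prev.2).choose prev.1, by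
        rw [Finset.coe_insert]
        exact Set.insert_subset (hstep prev.1 prev.2).choose_spec.1 prev.2⟩) n
  let seq : ℕ → Multiset ℕ := fun n => (hstep (chain n).1 (chain n).2).choose
  have hchain_succ : ∀ n, (chain n).1 ⊆ (chain (n + 1)).1 := by
    intro n
    show (chain n).1 ⊆ insert (seq n) (chain n).1
    exact Finset.subset_insert _ _
  have hchain_mono : ∀ m n, m ≤ n → (chain m).1 ⊆ (chain n).1 := by
    intro m n hmn
    induction hmn with
    | refl => exact Finset.Subset.refl _
    | step h ih => exact ih.trans (hchain_succ _)
  have hbad : ∀ i j, i < j → ¬ Rrel (seq i) (seq j) := by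
    intro i j hij
    have hmem : seq i ∈ (chain j).1 := by
      have h1 : seq i ∈ (chain (i + 1)).1 := Finset.mem_insert_self _ _
      exact hchain_mono (i + 1) j hij h1
    exact (hstep (chain j).1 (chain j).2).choose_spec.2 (seq i) hmem
  obtain ⟨i, j, hij, hr⟩ := Rrel_pwo seq
  exact hbad i j hij hr

end SpechtAux

namespace SpechtAux

open FreeLieAlgebra

variable (F : Type) [Field F]

theorem Lcomp0_diagonal {a : Matrix (Fin 2) (Fin 2) F} (ha : a ∈ Lcomp F 2 0) :
    ∃ d : Fin 2 → F, a = Matrix.diagonal d := by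
  induction ha using Submodule.span_induction with
  | mem x hx =>
    obtain ⟨i, j, hij, hg, rfl⟩ := hx
    fin_cases i <;> fin_cases j
    · exact ⟨fun k => if k = 0 then 1 else 0, by
        ext a b
        simp [Matrix.single, Matrix.diagonal]
        aesop⟩
    · exfalso; revert hg; decide
    · exfalso; revert hij; decide
    · exact ⟨fun k => if k = 1 then 1 else 0, by
        ext a b
        simp [Matrix.single, Matrix.diagonal]
        aesop⟩
  | zero => exact ⟨0, (Matrix.diagonal_zero).symm⟩
  | add x y _ _ hx hy =>
    obtain ⟨d, rfl⟩ := hx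
    obtain ⟨e, rfl⟩ := hy
    exact ⟨fun i => d i + e i, by rw [Matrix.diagonal_add]⟩
  | smul c x _ hx =>
    obtain ⟨d, rfl⟩ := hx
    refine ⟨c • d, ?_⟩
    ext i j
    by_cases h : i = j <;> simp [Matrix.diagonal, h]

theorem Lcomp1_e01 {a : Matrix (Fin 2) (Fin 2) F} (ha : a ∈ Lcomp F 2 1) :
    ∃ c : F, a = c • Matrix.single (0 : Fin 2) (1 : Fin 2) (1 : F) := by
  induction ha using Submodule.span_induction with
  | mem x hx =>
    obtain ⟨i, j, hij, hg, rfl⟩ := hx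
    fin_cases i <;> fin_cases j
    · exfalso; revert hg; decide
    · exact ⟨1, by rw [one_smul]; rfl⟩
    · exfalso; revert hij; decide
    · exfalso; revert hg; decide
  | zero => exact ⟨0, by simp⟩
  | add x y _ _ hx hy =>
    obtain ⟨c, rfl⟩ := hx
    obtain ⟨c', rfl⟩ := hy
    exact ⟨c + c', by rw [add_smul]⟩
  | smul c x _ hx =>
    obtain ⟨c', rfl⟩ := hx
    exact ⟨c * c', by rw [smul_smul]⟩

theorem f1_gradedId : f1 F ∈ gradedId F 2 := by
  intro v hv
  unfold f1 yv
  rw [LieHom.map_lie, lift_of_apply, lift_of_apply]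
  obtain ⟨d, hd⟩ := Lcomp0_diagonal F (hv 0 0)
  obtain ⟨e, he⟩ := Lcomp0_diagonal F (hv 0 1)
  rw [hd, he, Ring.lie_def, Matrix.diagonal_mul_diagonal, Matrix.diagonal_mul_diagonal]
  rw [show (fun i => d i * e i) = fun i => e i * d i from funext fun i => mul_comm _ _]
  exact sub_self _

theorem f2_gradedId : f2 F ∈ gradedId F 2 := by
  intro v hv
  unfold f2 zv
  rw [LieHom.map_lie, lift_of_apply, lift_of_apply]
  obtain ⟨c, hc⟩ := Lcomp1_e01 F (hv 1 0)
  obtain ⟨c', hc'⟩ := Lcomp1_e01 F (hv 1 1)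
  rw [hc, hc', Ring.lie_def]
  have he : Matrix.single (0 : Fin 2) (1 : Fin 2) (1 : F) *
      Matrix.single (0 : Fin 2) (1 : Fin 2) (1 : F) = 0 := by
    ext a b
    simp [Matrix.mul_apply, Matrix.single, Fin.sum_univ_two]
  rw [Matrix.smul_mul, Matrix.mul_smul, he, Matrix.mul_smul, Matrix.smul_mul, he]
  simp

end SpechtAux

namespace SpechtAux

open FreeLieAlgebra

variable {F : Type} [Field F]

theorem yv_change {T : Set (FreeGLie F 2)} (hT : IsTIdeal F 2 T) {i : ℕ}
    (h : yv F 2 i ∈ T) (j : ℕ) : yv F 2 j ∈ T := by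
  have hs := hT.substClosed _ (ySubst_graded F (fun _ => j)) _ h
  rwa [show FreeLieAlgebra.lift F (ySubst F (fun _ => j)) (yv F 2 i) = yv F 2 j by
    unfold yv
    rw [lift_of_apply]
    unfold ySubst
    rw [if_pos rfl]
    rfl] at hs

end SpechtAux

open SpechtAux in
/-- (Specht property for `UT₂(F)⁽⁻⁾`, `F` infinite.) Every `T`-ideal `J`
containing the ideal `I` of `ZMod 2`-graded identities of `UT₂(F)⁽⁻⁾` is finitely generated
as a `T`-ideal. -/
theorem stmt2 (F : Type) [Field F] [Infinite F]
    (J : Set (FreeGLie F 2)) (hJ : IsTIdeal F 2 J) (hIJ : gradedId F 2 ⊆ J) :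
    ∃ S : Set (FreeGLie F 2), S.Finite ∧ J = TClosure F 2 S := by
  classical
  have hf1J : f1 F ∈ J := hIJ (f1_gradedId F)
  have hf2J : f2 F ∈ J := hIJ (f2_gradedId F)
  have hpairJ : ({f1 F, f2 F} : Set (FreeGLie F 2)) ⊆ J := by
    intro u hu
    rcases hu with rfl | rfl
    · exact hf1J
    · exact hf2J
  obtain ⟨B, hBsub, hBbasis⟩ := finite_basis {μ : Multiset ℕ | Wm F 0 μ ∈ J}
  set Sy : Set (FreeGLie F 2) := {yv F 2 0} ∩ J with hSy
  set S : Set (FreeGLie F 2) := ({f1 F, f2 F} ∪ Sy) ∪ (fun μ => Wm F 0 μ) '' ↑B with hS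
  refine ⟨S, ?_, ?_⟩
  · refine Set.Finite.union (Set.Finite.union ?_ ?_) ?_
    · exact (Set.finite_singleton _).insert _
    · exact Set.Finite.subset (Set.finite_singleton (yv F 2 0)) Set.inter_subset_left
    · exact (B.finite_toSet).image _
  · apply Set.Subset.antisymm
    · -- J ⊆ TClosure S
      intro x hx
      rw [mem_TClosure_iff]
      intro T hT hST
      have hf1T : f1 F ∈ T := hST (Or.inl (Or.inl (Or.inl rfl)))
      have hf2T : f2 F ∈ T := hST (Or.inl (Or.inl (Or.inr rfl)))
      have hpairT : ({f1 F, f2 F} : Set (FreeGLie F 2)) ⊆ T := by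
        intro u hu
        rcases hu with rfl | rfl
        · exact hf1T
        · exact hf2T
      have hC0T : C0 F ⊆ T := TClosure_subset hT hpairT
      have hC0J : C0 F ⊆ J := TClosure_subset hJ hpairJ
      obtain ⟨nf, hnf, hnfC⟩ := normal_form (F := F) x
      have hnfJ : nf ∈ J := by
        have := IsT.sub hJ hx (hC0J hnfC)
        rwa [sub_sub_cancel] at this
      obtain ⟨c, hc⟩ := Finsupp.mem_span_range_iff_exists_finsupp.1 hnf
      rw [Finsupp.sum] at hc
      have hsumJ : (∑ d ∈ c.support, c d • toLie F d) ∈ J := by rw [hc]; exact hnfJ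
      have hsep := separation hJ c.support c hsumJ
      have hterm : ∀ d ∈ c.support, c d • toLie F d ∈ T := by
        intro d hd
        by_cases hcd : c d = 0
        · rw [hcd, zero_smul]; exact IsT.zero hT
        · have htlJ : toLie F d ∈ J := by
            have := IsT.smul hJ (c d)⁻¹ (hsep d hd)
            rwa [smul_smul, inv_mul_cancel₀ hcd, one_smul] at this
          have htlT : toLie F d ∈ T := by
            match d with
            | .inl i =>
              have hy0J : yv F 2 0 ∈ J := yv_change hJ htlJ 0
              have hy0T : yv F 2 0 ∈ T := hST (Or.inl (Or.inr ⟨rfl, hy0J⟩))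
              exact yv_change hT hy0T i
            | .inr (i, μ) =>
              have hWJ : Wm F 0 μ ∈ J := Wm_index hJ htlJ 0
              obtain ⟨ν, hνB, hR⟩ := hBbasis μ hWJ
              have hνT : Wm F 0 ν ∈ T := hST (Or.inr ⟨ν, hνB, rfl⟩)
              exact Rstep hT hf1T hR hνT i
          exact IsT.smul hT _ htlT
      have hnfT : nf ∈ T := by
        rw [← hc]
        exact IsT.sum hT _ _ hterm
      have := IsT.add hT (hC0T hnfC) hnfT
      rwa [sub_add_cancel] at this
    · -- TClosure S ⊆ J
      apply TClosure_subset hJ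
      intro u hu
      rcases hu with (hu | hu) | ⟨ν, hν, rfl⟩
      · exact hpairJ hu
      · exact hu.2
      · exact hBsub hν
end

section
/- Let F be an infinite field and let I = T_{Z_3}(UT_3(F)^{(-)}) be the ideal of Z_3-graded identities of UT_3(F)^{(-)} with its canonical Z_3-grading. For i = 1, 2 and f, g ∈ B_i: (i) if V_f ≤ V_g in the Higman order on finite sequences of positive integers, then g is a consequence of f modulo I, i.e. g ∈ ⟨{f} ∪ I⟩; (ii) the set B_i quasi-ordered by f ≤ g iff V_f ≤ V_g satisfies the finite basis property (every infinite sequence in B_i has an infinite ascending subsequence). -/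
open FreeLieAlgebra

attribute [local instance 100] LieRing.ofAssociativeRing

/-- The element `[u, a₁y₁, …, aₘyₘ]` of `B₁` (for `g = 1`, so `u = z` has degree 1) or of
`B₂` (for `g = 2`, so `u = w` has degree 2), for an exponent list `a = (a₁,…,aₘ)`. -/
noncomputable def BelG (F : Type) [Field F] (n : ℕ) (g : ZMod n) (a : List ℕ) :
    FreeGLie F n :=
  lnw F n (FreeLieAlgebra.of F (g, 0)) (yblock F n 0 a)

section Aux

variable (F : Type) [Field F]

/-! ### Matrix facts: `Lcomp F 3 0` consists of commuting (diagonal) matrices. -/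

lemma mem_Lcomp0_isDiag {A : Matrix (Fin 3) (Fin 3) F} (hA : A ∈ Lcomp F 3 0) : A.IsDiag := by
  induction hA using Submodule.span_induction with
  | mem x hx =>
    obtain ⟨i, j, hle, hdeg, rfl⟩ := hx
    have key : ∀ i j : Fin 3, i ≤ j → ((j : ℕ) : ZMod 3) - ((i : ℕ) : ZMod 3) = 0 → i = j := by
      decide
    have hij : i = j := key i j hle hdeg
    subst hij
    intro a b hab
    apply Matrix.single_apply_of_ne
    rintro ⟨rfl, rfl⟩
    exact hab rfl
  | zero => exact Matrix.isDiag_zero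
  | add x y _ _ hx hy => exact hx.add hy
  | smul a x _ hx => exact hx.smul a

lemma lie_zero_of_Lcomp0 {A B : Matrix (Fin 3) (Fin 3) F}
    (hA : A ∈ Lcomp F 3 0) (hB : B ∈ Lcomp F 3 0) : ⁅A, B⁆ = 0 := by
  have hA' := mem_Lcomp0_isDiag F hA
  have hB' := mem_Lcomp0_isDiag F hB
  rw [Ring.lie_def, sub_eq_zero, ← hA'.diagonal_diag, ← hB'.diagonal_diag,
    Matrix.diagonal_mul_diagonal, Matrix.diagonal_mul_diagonal]
  exact congrArg Matrix.diagonal (funext fun i => mul_comm _ _)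

/-! ### Basic closure properties of `gradedId`. -/

lemma gi_add {x y : FreeGLie F 3} (hx : x ∈ gradedId F 3) (hy : y ∈ gradedId F 3) :
    x + y ∈ gradedId F 3 := fun v hv => by
  rw [map_add, hx v hv, hy v hv, add_zero]

lemma gi_lie_right {x : FreeGLie F 3} (a : FreeGLie F 3) (hx : x ∈ gradedId F 3) :
    ⁅x, a⁆ ∈ gradedId F 3 := fun v hv => by
  rw [LieHom.map_lie, hx v hv, zero_lie]

lemma gi_zero : (0 : FreeGLie F 3) ∈ gradedId F 3 := fun v _ => by rw [map_zero]

/-- The swap identity `[u, yᵢ, yⱼ] - [u, yⱼ, yᵢ] = [u, [yᵢ, yⱼ]]` is a graded identity. -/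
lemma gi_swap (u : FreeGLie F 3) (i j : ℕ) :
    ⁅⁅u, yv F 3 i⁆, yv F 3 j⁆ - ⁅⁅u, yv F 3 j⁆, yv F 3 i⁆ ∈ gradedId F 3 := by
  have key : ⁅⁅u, yv F 3 i⁆, yv F 3 j⁆ - ⁅⁅u, yv F 3 j⁆, yv F 3 i⁆
      = ⁅u, ⁅yv F 3 i, yv F 3 j⁆⁆ := by
    rw [lie_lie, ← lie_skew ⁅u, yv F 3 j⁆ (yv F 3 i)]
    abel
  rw [key]
  intro v hv
  rw [LieHom.map_lie, LieHom.map_lie]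
  show ⁅_, ⁅FreeLieAlgebra.lift F v (FreeLieAlgebra.of F ((0 : ZMod 3), i)),
    FreeLieAlgebra.lift F v (FreeLieAlgebra.of F ((0 : ZMod 3), j))⁆⁆ = 0
  rw [lift_of_apply, lift_of_apply, lie_zero_of_Lcomp0 F (hv 0 i) (hv 0 j), lie_zero]

/-! ### Left-normed word lemmas. -/

lemma lnw_cons (x a : FreeGLie F 3) (l : List (FreeGLie F 3)) :
    lnw F 3 x (a :: l) = lnw F 3 ⁅x, a⁆ l := rfl

lemma lnw_append (x : FreeGLie F 3) (l₁ l₂ : List (FreeGLie F 3)) :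
    lnw F 3 x (l₁ ++ l₂) = lnw F 3 (lnw F 3 x l₁) l₂ := by
  simp [lnw]

lemma lnw_sub (l : List (FreeGLie F 3)) : ∀ x y : FreeGLie F 3,
    lnw F 3 x l - lnw F 3 y l = lnw F 3 (x - y) l := by
  induction l with
  | nil => intro x y; rfl
  | cons a l ih =>
    intro x y
    rw [lnw_cons, lnw_cons, lnw_cons, ih, sub_lie]

lemma lnw_mem_gi {x : FreeGLie F 3} (hx : x ∈ gradedId F 3) :
    ∀ l : List (FreeGLie F 3), lnw F 3 x l ∈ gradedId F 3 := by
  intro l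
  induction l generalizing x with
  | nil => exact hx
  | cons a l ih => exact ih (gi_lie_right F a hx)

lemma lnw_perm_diff : ∀ {l l' : List (FreeGLie F 3)}, l.Perm l' →
    (∀ x ∈ l, ∃ i, x = yv F 3 i) → ∀ u : FreeGLie F 3,
    lnw F 3 u l - lnw F 3 u l' ∈ gradedId F 3 := by
  intro l l' h
  induction h with
  | nil => intro _ u; simpa using gi_zero F
  | cons x h ih =>
    intro hm u
    rw [lnw_cons, lnw_cons]
    exact ih (fun w hw => hm w (List.mem_cons_of_mem _ hw)) ⁅u, x⁆
  | swap x y l =>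
    intro hm u
    obtain ⟨j, rfl⟩ := hm y (by simp)
    obtain ⟨i, rfl⟩ := hm x (by simp)
    rw [lnw_cons, lnw_cons, lnw_cons, lnw_cons, lnw_sub]
    exact lnw_mem_gi F (gi_swap F u j i) l
  | trans h1 h2 ih1 ih2 =>
    intro hm u
    have hm2 := fun w hw => hm w (h1.mem_iff.mpr hw)
    have := gi_add F (ih1 hm u) (ih2 hm2 u)
    rwa [sub_add_sub_cancel] at this

/-! ### Homogeneous words. -/

lemma hw_lnw {g : ZMod 3} {x : FreeGLie F 3} (hx : HomWord F 3 g x) :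
    ∀ L : List ℕ, HomWord F 3 g (lnw F 3 x (L.map (yv F 3))) := by
  intro L
  induction L generalizing x with
  | nil => exact hx
  | cons i L ih =>
    rw [List.map_cons, lnw_cons]
    apply ih
    have := HomWord.bracket hx (HomWord.of (0 : ZMod 3) i)
    rwa [add_zero] at this

/-! ### Index-list combinatorics. -/

def idxList : ℕ → List ℕ → List ℕ
  | _, [] => []
  | off, x :: r => List.replicate x off ++ idxList (off + 1) r

lemma yblock_eq : ∀ (a : List ℕ) (off : ℕ),
    yblock F 3 off a = (idxList off a).map (yv F 3) := by
  intro a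
  induction a with
  | nil => intro off; rfl
  | cons x r ih =>
    intro off
    simp [yblock, idxList, List.map_append, List.map_replicate, ih]

lemma idx_shift : ∀ (a : List ℕ) (off : ℕ),
    idxList (off + 1) a = (idxList off a).map (· + 1) := by
  intro a
  induction a with
  | nil => intro off; rfl
  | cons x r ih =>
    intro off
    simp [idxList, List.map_append, List.map_replicate, ih (off + 1)]

lemma comb : ∀ {a b : List ℕ}, List.SublistForall₂ (· ≤ ·) a b →
    ∃ ψ : ℕ → ℕ, ((idxList 0 a : Multiset ℕ).map ψ) ≤ (idxList 0 b : Multiset ℕ) := by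
  intro a b h
  induction h with
  | nil => exact ⟨id, by simp [idxList]⟩
  | @cons x y l1 l2 hxy hrec ih =>
    obtain ⟨ψ', hψ'⟩ := ih
    refine ⟨fun n => if n = 0 then 0 else ψ' (n - 1) + 1, ?_⟩
    have e : ∀ (t : ℕ) (l : List ℕ), (idxList 0 (t :: l) : Multiset ℕ)
        = Multiset.replicate t 0 + ((idxList 0 l : Multiset ℕ)).map (· + 1) := by
      intro t l
      show ((List.replicate t 0 ++ idxList 1 l : List ℕ) : Multiset ℕ) = _
      rw [idx_shift, ← Multiset.coe_replicate, Multiset.map_coe, Multiset.coe_add]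
    rw [e, e, Multiset.map_add, Multiset.map_replicate]
    apply add_le_add
    · simpa using (Multiset.replicate_le_replicate (0 : ℕ)).mpr hxy
    · rw [Multiset.map_map]
      have hco : ((fun n => if n = 0 then 0 else ψ' (n - 1) + 1) ∘ (· + 1)) = ((· + 1) ∘ ψ') := by
        funext k; simp
      rw [hco, ← Multiset.map_map]
      exact Multiset.map_le_map hψ'
  | @cons_right y l1 l2 hrec ih =>
    obtain ⟨ψ', hψ'⟩ := ih
    refine ⟨fun n => ψ' n + 1, ?_⟩
    have e : (idxList 0 (y :: l2) : Multiset ℕ)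
        = Multiset.replicate y 0 + ((idxList 0 l2 : Multiset ℕ)).map (· + 1) := by
      show ((List.replicate y 0 ++ idxList 1 l2 : List ℕ) : Multiset ℕ) = _
      rw [idx_shift, ← Multiset.coe_replicate, Multiset.map_coe, Multiset.coe_add]
    rw [e]
    calc (idxList 0 l1 : Multiset ℕ).map (fun n => ψ' n + 1)
        = ((idxList 0 l1 : Multiset ℕ).map ψ').map (· + 1) := by
          rw [Multiset.map_map]; rfl
      _ ≤ ((idxList 0 l2 : Multiset ℕ)).map (· + 1) := Multiset.map_le_map hψ'
      _ ≤ _ := Multiset.le_add_left _ _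

/-- The graded substitution used in the proof of (i). -/
noncomputable def gsubst (g : ZMod 3) (ψ : ℕ → ℕ) (eL : List ℕ) : ZMod 3 × ℕ → FreeGLie F 3 :=
  fun p => if p.1 = 0 then yv F 3 (ψ p.2)
    else if p = (g, 0) then lnw F 3 (FreeLieAlgebra.of F (g, 0)) (eL.map (yv F 3))
    else FreeLieAlgebra.of F p

lemma gsubst_graded (g : ZMod 3) (ψ : ℕ → ℕ) (eL : List ℕ) :
    IsGradedSubst F 3 (gsubst F g ψ eL) := by
  intro g' i
  unfold gsubst
  dsimp only
  split_ifs with h1 h2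
  · rw [h1]
    exact Submodule.subset_span (HomWord.of (0 : ZMod 3) (ψ i))
  · obtain ⟨rfl, rfl⟩ : g' = g ∧ i = 0 := by
      constructor <;> [exact congrArg Prod.fst h2; exact congrArg Prod.snd h2]
    exact Submodule.subset_span (hw_lnw F (HomWord.of _ 0) eL)
  · exact Submodule.subset_span (HomWord.of g' i)

lemma lift_lnw (s : ZMod 3 × ℕ → FreeGLie F 3) (l : List (FreeGLie F 3)) :
    ∀ x, FreeLieAlgebra.lift F s (lnw F 3 x l)
      = lnw F 3 (FreeLieAlgebra.lift F s x) (l.map (FreeLieAlgebra.lift F s)) := by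
  induction l with
  | nil => intro x; rfl
  | cons a l ih =>
    intro x
    rw [lnw_cons, ih, List.map_cons, lnw_cons, LieHom.map_lie]

end Aux

/-- For `i = 1, 2` (i.e. for a generator of degree `g = 1` resp. `g = 2`)
and `f, g ∈ Bᵢ`: (i) if `V_f ≤ V_g` in the Higman order then `g` is a consequence of `f`
modulo the ideal `I` of `ZMod 3`-graded identities of `UT₃(F)⁽⁻⁾`; (ii) `Bᵢ`, quasi-ordered
by comparing the exponent sequences `V` in the Higman order, is well-quasi-ordered. -/
theorem stmt3 (F : Type) [Field F] [Infinite F] (g : ZMod 3) (hg : g = 1 ∨ g = 2) :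
    (∀ a b : List ℕ, a ≠ [] → (∀ x ∈ a, 0 < x) → b ≠ [] → (∀ x ∈ b, 0 < x) →
        List.SublistForall₂ (· ≤ ·) a b →
        BelG F 3 g b ∈ TClosure F 3 ({BelG F 3 g a} ∪ gradedId F 3)) ∧
    (∀ f : ℕ → List ℕ, (∀ m, f m ≠ [] ∧ ∀ x ∈ f m, 0 < x) →
        ∃ φ : ℕ → ℕ, StrictMono φ ∧
          ∀ i j, i ≤ j → List.SublistForall₂ (· ≤ ·) (f (φ i)) (f (φ j))) := by
  have hgne : g ≠ 0 := by rcases hg with rfl | rfl <;> decide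
  constructor
  · intro a b _ _ _ _ hab
    obtain ⟨ψ, hψ⟩ := comb hab
    set Ma : Multiset ℕ := (idxList 0 a : Multiset ℕ).map ψ with hMa
    set extra : Multiset ℕ := (idxList 0 b : Multiset ℕ) - Ma with hextra
    have hsum : Ma + extra = (idxList 0 b : Multiset ℕ) := add_tsub_cancel_of_le hψ
    set eL := extra.toList with heLdef
    have heL : (eL : Multiset ℕ) = extra := Multiset.coe_toList extra
    set s := gsubst F g ψ eL with hs
    have hgs : IsGradedSubst F 3 s := gsubst_graded F g ψ eL
    -- the lift of BelG a
    have hz : s (g, 0) = lnw F 3 (FreeLieAlgebra.of F (g, 0)) (eL.map (yv F 3)) := by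
      rw [hs]; unfold gsubst; simp [hgne]
    have hy : ∀ i : ℕ, FreeLieAlgebra.lift F s (yv F 3 i) = yv F 3 (ψ i) := by
      intro i
      show FreeLieAlgebra.lift F s (FreeLieAlgebra.of F ((0 : ZMod 3), i)) = _
      rw [lift_of_apply, hs]
      unfold gsubst
      simp
    have hlift : FreeLieAlgebra.lift F s (BelG F 3 g a)
        = lnw F 3 (FreeLieAlgebra.of F (g, 0))
            ((eL ++ (idxList 0 a).map ψ).map (yv F 3)) := by
      rw [BelG, lift_lnw, lift_of_apply, hz, yblock_eq, List.map_map]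
      rw [List.map_append, ← lnw_append]
      congr 2
      rw [List.map_map]
      apply List.map_congr_left
      intro i _
      simpa using hy i
    have hperm : ((idxList 0 b).map (yv F 3)).Perm
        ((eL ++ (idxList 0 a).map ψ).map (yv F 3)) := by
      apply List.Perm.map
      rw [← Multiset.coe_eq_coe, ← Multiset.coe_add, heL, ← Multiset.map_coe, ← hMa]
      rw [add_comm, hsum]
    have hdiff : BelG F 3 g b - FreeLieAlgebra.lift F s (BelG F 3 g a) ∈ gradedId F 3 := by
      rw [hlift, BelG, yblock_eq]
      apply lnw_perm_diff F hperm
      intro x hx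
      obtain ⟨i, _, rfl⟩ := List.mem_map.mp hx
      exact ⟨i, rfl⟩
    refine Set.mem_sInter.mpr ?_
    rintro T ⟨hT, hST⟩
    have h1 : BelG F 3 g a ∈ T := hST (Set.mem_union_left _ rfl)
    have h2 : FreeLieAlgebra.lift F s (BelG F 3 g a) ∈ T := hT.substClosed s hgs _ h1
    have h3 : BelG F 3 g b - FreeLieAlgebra.lift F s (BelG F 3 g a) ∈ T :=
      hST (Set.mem_union_right _ hdiff)
    obtain ⟨J, rfl⟩ := hT.isIdeal
    have : BelG F 3 g b = FreeLieAlgebra.lift F s (BelG F 3 g a)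
        + (BelG F 3 g b - FreeLieAlgebra.lift F s (BelG F 3 g a)) := by abel
    rw [this]
    exact J.add_mem h2 h3
  · intro f hf
    have hwf : WellFounded ((· < ·) : ℕ → ℕ → Prop) := wellFounded_lt
    have hpwo : (Set.univ : Set ℕ).IsPWO := (Set.isWF_univ_iff.mpr ⟨hwf⟩).isPWO
    have hH := Set.PartiallyWellOrderedOn.partiallyWellOrderedOn_sublistForall₂
      ((· ≤ ·) : ℕ → ℕ → Prop) hpwo
    haveI : IsPreorder (List ℕ) (List.SublistForall₂ ((· ≤ ·) : ℕ → ℕ → Prop)) := {}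
    obtain ⟨φ, hφ⟩ := hH.exists_monotone_subseq (fun n => show f n ∈ _ by simp)
    exact ⟨φ, φ.strictMono, fun i j hij => hφ i j hij⟩
end

section
/- Let F be an infinite field, and let z_1, z_2 be degree-1 variables and y_1,…,y_m degree-0 variables in the free Z_3-graded Lie algebra. For each subset S = {i_1 < … < i_t} of {1,…,m} with complement S^c = {i_{t+1} < … < i_m}, let c_S = [z_1, y_{i_1},…,y_{i_t}, z_2, y_{i_{t+1}},…,y_{i_m}] (left-normed). Then the commutators c_S, over all subsets S of {1,…,m}, are linearly independent modulo the ideal of Z_3-graded identities of UT_3(F)^{(-)} with its canonical Z_3-grading: no nontrivial F-linear combination of them is a Z_3-graded identity of UT_3(F)^{(-)}. -/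
open FreeLieAlgebra

attribute [local instance 100] LieRing.ofAssociativeRing

/-- For a subset `S = {i₁ < … < i_t}` of `{1,…,m}` with complement
`Sᶜ = {i_{t+1} < … < i_m}`, the left-normed commutator
`c_S = [z₁, y_{i₁},…,y_{i_t}, z₂, y_{i_{t+1}},…,y_{i_m}]`, where `z₁, z₂` are the degree-1
variables `(1,0)`, `(1,1)` and the `y_i` are degree-0 variables. -/
noncomputable def cS (F : Type) [Field F] (m : ℕ) (S : Finset (Fin m)) : FreeGLie F 3 :=
  lnw F 3 (FreeLieAlgebra.of F ((1 : ZMod 3), 0))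
    (((S.sort (· ≤ ·)).map fun i => yv F 3 i.val) ++ [FreeLieAlgebra.of F ((1 : ZMod 3), 1)] ++
      ((Sᶜ.sort (· ≤ ·)).map fun i => yv F 3 i.val))


/-! ### Auxiliary machinery for the proof -/

section StmtSixAux

variable {F : Type} [Field F]

/-- Matrix units in `Matrix (Fin 3) (Fin 3) F`. -/
private def Em (F : Type) [Field F] (i j : Fin 3) : Matrix (Fin 3) (Fin 3) F :=
  Matrix.single i j 1

private lemma lie_E01_diag (a b : F) :
    ⁅Em F 0 1, a • Em F 1 1 + b • Em F 2 2⁆ = a • Em F 0 1 := by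
  rw [Ring.lie_def]
  ext i j
  fin_cases i <;> fin_cases j <;>
    simp [Em, Matrix.mul_apply, Matrix.single, Fin.sum_univ_three]

private lemma lie_E02_diag (a b : F) :
    ⁅Em F 0 2, a • Em F 1 1 + b • Em F 2 2⁆ = b • Em F 0 2 := by
  rw [Ring.lie_def]
  ext i j
  fin_cases i <;> fin_cases j <;>
    simp [Em, Matrix.mul_apply, Matrix.single, Fin.sum_univ_three]

private lemma lie_E01_E12 : ⁅Em F 0 1, Em F 1 2⁆ = Em F 0 2 := by
  rw [Ring.lie_def]
  ext i j
  fin_cases i <;> fin_cases j <;>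
    simp [Em, Matrix.mul_apply, Matrix.single, Fin.sum_univ_three]

/-- A Lie algebra hom commutes with left-normed folds of brackets. -/
private lemma lift_foldl {L M : Type} [LieRing L] [LieAlgebra F L] [LieRing M]
    [LieAlgebra F M] (f : L →ₗ⁅F⁆ M) :
    ∀ (l : List L) (x : L),
      f (l.foldl (fun a b => ⁅a, b⁆) x) = l.foldl (fun a b => ⁅a, f b⁆) (f x) := by
  intro l
  induction l with
  | nil => intro x; simp
  | cons j t ih => intro x; simp only [List.foldl_cons, ih, LieHom.map_lie]

/-- Fold along common eigenvectors. -/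
private lemma foldl_eig {ι M : Type} [LieRing M] [LieAlgebra F M]
    (E : M) (f : ι → M) (ev : ι → F) (hev : ∀ i, ⁅E, f i⁆ = ev i • E) :
    ∀ (l : List ι) (s : F),
      l.foldl (fun A i => ⁅A, f i⁆) (s • E) = ((l.map ev).prod * s) • E := by
  intro l
  induction l with
  | nil => intro s; simp
  | cons j t ih =>
    intro s
    simp only [List.foldl_cons, List.map_cons, List.prod_cons]
    rw [smul_lie, hev, smul_smul, ih]
    congr 1
    ring

private lemma sort_map_prod {m : ℕ} (S : Finset (Fin m)) (f : Fin m → F) :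
    ((S.sort (· ≤ ·)).map f).prod = ∏ i ∈ S, f i := by
  rw [← Finset.prod_map_toList]
  exact List.Perm.prod_eq ((Finset.sort_perm_toList S _).map f)

end StmtSixAux

section StmtSixMain

variable {F : Type} [Field F]

/-- Indicator eigenvalue functions for a chosen subset `S0`. -/
private def av (F : Type) [Field F] {m : ℕ} (S0 : Finset (Fin m)) (i : ℕ) : F :=
  if h : i < m then (if (⟨i, h⟩ : Fin m) ∈ S0 then 1 else 0) else 0

private def bv (F : Type) [Field F] {m : ℕ} (S0 : Finset (Fin m)) (i : ℕ) : F :=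
  if h : i < m then (if (⟨i, h⟩ : Fin m) ∈ S0 then 0 else 1) else 0

private lemma av_val {m : ℕ} (S0 : Finset (Fin m)) (i : Fin m) :
    av F S0 i.val = if i ∈ S0 then 1 else 0 := by
  simp [av, i.isLt]

private lemma bv_val {m : ℕ} (S0 : Finset (Fin m)) (i : Fin m) :
    bv F S0 i.val = if i ∈ S0 then 0 else 1 := by
  simp [bv, i.isLt]

/-- The substitution used to separate `c_{S0}`. -/
private def vs (F : Type) [Field F] {m : ℕ} (S0 : Finset (Fin m)) :
    ZMod 3 × ℕ → Matrix (Fin 3) (Fin 3) F := fun p =>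
  if p.1 = 0 then av F S0 p.2 • Em F 1 1 + bv F S0 p.2 • Em F 2 2
  else if p = (1, 0) then Em F 0 1
  else if p = (1, 1) then Em F 1 2
  else 0

private lemma vs_mem {m : ℕ} (S0 : Finset (Fin m)) :
    ∀ g i, vs F S0 (g, i) ∈ Lcomp F 3 g := by
  intro g i
  by_cases h0 : g = 0
  · subst h0
    show (if _ then _ else _) ∈ _
    rw [if_pos rfl]
    refine Submodule.add_mem _ (Submodule.smul_mem _ _ (Submodule.subset_span ?_))
      (Submodule.smul_mem _ _ (Submodule.subset_span ?_))
    · exact ⟨1, 1, le_refl _, by decide, rfl⟩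
    · exact ⟨2, 2, le_refl _, by decide, rfl⟩
  · show (if _ then _ else _) ∈ _
    rw [if_neg h0]
    by_cases h1 : ((g, i) : ZMod 3 × ℕ) = (1, 0)
    · rw [if_pos h1]
      injection h1 with hg hi
      subst hg
      exact Submodule.subset_span ⟨0, 1, by decide, by decide, rfl⟩
    · rw [if_neg h1]
      by_cases h2 : ((g, i) : ZMod 3 × ℕ) = (1, 1)
      · rw [if_pos h2]
        injection h2 with hg hi
        subst hg
        exact Submodule.subset_span ⟨1, 2, by decide, by decide, rfl⟩
      · rw [if_neg h2]
        exact Submodule.zero_mem _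

private lemma vs_z1 {m : ℕ} (S0 : Finset (Fin m)) :
    FreeLieAlgebra.lift F (vs F S0) (FreeLieAlgebra.of F ((1 : ZMod 3), 0)) = Em F 0 1 := by
  rw [FreeLieAlgebra.lift_of_apply]
  show (if _ then _ else _) = _
  rw [if_neg (by decide), if_pos rfl]

private lemma vs_z2 {m : ℕ} (S0 : Finset (Fin m)) :
    FreeLieAlgebra.lift F (vs F S0) (FreeLieAlgebra.of F ((1 : ZMod 3), 1)) = Em F 1 2 := by
  rw [FreeLieAlgebra.lift_of_apply]
  show (if _ then _ else _) = _
  rw [if_neg (by decide), if_neg (by decide), if_pos rfl]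

private lemma vs_y {m : ℕ} (S0 : Finset (Fin m)) (i : ℕ) :
    FreeLieAlgebra.lift F (vs F S0) (yv F 3 i) =
      av F S0 i • Em F 1 1 + bv F S0 i • Em F 2 2 := by
  rw [yv, FreeLieAlgebra.lift_of_apply]
  show (if _ then _ else _) = _
  rw [if_pos rfl]

private lemma vs_cS {m : ℕ} (S0 S : Finset (Fin m)) :
    FreeLieAlgebra.lift F (vs F S0) (cS F m S) =
      ((∏ i ∈ Sᶜ, bv F S0 i.val) * ((∏ i ∈ S, av F S0 i.val) * 1)) • Em F 0 2 := by
  rw [cS, lnw, lift_foldl, List.foldl_append, List.foldl_append, vs_z1,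
    List.foldl_map, List.foldl_map]
  simp only [vs_y, vs_z2, List.foldl_cons, List.foldl_nil]
  rw [show (Em F 0 1 : Matrix (Fin 3) (Fin 3) F) = (1 : F) • Em F 0 1 from (one_smul F _).symm,
    foldl_eig (Em F 0 1) _ (fun i : Fin m => av F S0 i.val) (fun i => lie_E01_diag _ _),
    sort_map_prod, smul_lie, lie_E01_E12,
    foldl_eig (Em F 0 2) _ (fun i : Fin m => bv F S0 i.val) (fun i => lie_E02_diag _ _),
    sort_map_prod]

end StmtSixMain

/-- The commutators `c_S`, over all subsets `S` of `{1,…,m}`, are linearly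
independent modulo the ideal of `ZMod 3`-graded identities of `UT₃(F)⁽⁻⁾`: no nontrivial
`F`-linear combination of them is a graded identity of `UT₃(F)⁽⁻⁾`. -/
theorem stmt6 (F : Type) [Field F] [Infinite F] (m : ℕ) (c : Finset (Fin m) → F)
    (h : (∑ S : Finset (Fin m), c S • cS F m S) ∈ gradedId F 3) :
    ∀ S, c S = 0 := by
  intro S0
  have key : (FreeLieAlgebra.lift F (vs F S0)).toLinearMap (∑ S : Finset (Fin m), c S • cS F m S) = 0 :=
    h (vs F S0) (vs_mem S0)
  rw [map_sum] at key
  simp only [map_smul, LieHom.coe_toLinearMap, vs_cS, smul_smul] at key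
  rw [← Finset.sum_smul] at key
  have hs : (∑ S : Finset (Fin m),
      c S * ((∏ i ∈ Sᶜ, bv F S0 i.val) * ((∏ i ∈ S, av F S0 i.val) * 1))) = 0 := by
    have h02 := Matrix.ext_iff.mpr key 0 2
    simpa [Em, Matrix.single] using h02
  rw [Finset.sum_eq_single S0] at hs
  · have h1 : (∏ i ∈ S0, av F S0 i.val) = 1 :=
      Finset.prod_eq_one fun i hi => by rw [av_val, if_pos hi]
    have h2 : (∏ i ∈ S0ᶜ, bv F S0 i.val) = 1 :=
      Finset.prod_eq_one fun i hi => by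
        rw [bv_val, if_neg (Finset.mem_compl.mp hi)]
    rw [h1, h2] at hs
    simpa using hs
  · intro S _ hne
    by_cases hsub : S ⊆ S0
    · obtain ⟨i, hiS0, hiS⟩ := Finset.exists_of_ssubset (hsub.ssubset_of_ne hne)
      have : (∏ i ∈ Sᶜ, bv F S0 i.val) = 0 :=
        Finset.prod_eq_zero (Finset.mem_compl.mpr hiS) (by rw [bv_val, if_pos hiS0])
      rw [this]
      ring
    · obtain ⟨i, hiS, hiS0⟩ := Finset.not_subset.mp hsub
      have : (∏ i ∈ S, av F S0 i.val) = 0 :=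
        Finset.prod_eq_zero hiS (by rw [av_val, if_neg hiS0])
      rw [this]
      ring
  · intro hS0
    exact absurd (Finset.mem_univ S0) hS0
end

section
/- Let F be an infinite field, z_1, z_2 degree-1 variables and y_1,…,y_n degree-0 variables in the free Z_3-graded Lie algebra. Then the commutators c = [z_1, a_1 y_1,…,a_n y_n, z_2, b_1 y_1,…,b_n y_n], over all choices of nonnegative integer exponent vectors (a_1,…,a_n) and (b_1,…,b_n), are linearly independent modulo the ideal of Z_3-graded identities of UT_3(F)^{(-)} with its canonical Z_3-grading: no nontrivial F-linear combination of distinct such commutators is a Z_3-graded identity of UT_3(F)^{(-)}. -/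
open FreeLieAlgebra

attribute [local instance 100] LieRing.ofAssociativeRing

/-- The block `a₁y₁, …, aₘyₘ`: the list of degree-0 variables `y₀,…,y_{m-1}` with
multiplicities `a 0, …, a (m-1)`. -/
noncomputable def ybF (F : Type) [Field F] (n m : ℕ) (a : Fin m → ℕ) :
    List (FreeGLie F n) :=
  (List.finRange m).flatMap fun i => List.replicate (a i) (yv F n i.val)

/-- The element `[z₁, a₁y₁,…,aₘyₘ, z₂, b₁y₁,…,bₘyₘ]` of `B₍₁,₁₎`, where `z₁, z₂` are the
degree-1 variables `(1,0)`, `(1,1)`. -/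
noncomputable def com11 (F : Type) [Field F] (m : ℕ) (a b : Fin m → ℕ) : FreeGLie F 3 :=
  lnw F 3 (FreeLieAlgebra.of F ((1 : ZMod 3), 0))
    (ybF F 3 m a ++ [FreeLieAlgebra.of F ((1 : ZMod 3), 1)] ++ ybF F 3 m b)


namespace Stmt7Aux

variable {F : Type} [Field F]

noncomputable def EE (F : Type) [Field F] (i j : Fin 3) : Matrix (Fin 3) (Fin 3) F :=
  Matrix.single i j 1

lemma br1 (x y : F) : ⁅EE F 0 1, x • EE F 1 1 + y • EE F 2 2⁆ = x • EE F 0 1 := by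
  simp [Ring.lie_def, EE, Matrix.mul_smul, Matrix.smul_mul, mul_add, add_mul,
    show (1:Fin 3) ≠ 2 by decide, show (1:Fin 3) ≠ 0 by decide, show (2:Fin 3) ≠ 0 by decide]

lemma br2 (x y : F) : ⁅EE F 0 2, x • EE F 1 1 + y • EE F 2 2⁆ = y • EE F 0 2 := by
  simp [Ring.lie_def, EE, Matrix.mul_smul, Matrix.smul_mul, mul_add, add_mul,
    show (2:Fin 3) ≠ 1 by decide, show (1:Fin 3) ≠ 0 by decide, show (2:Fin 3) ≠ 0 by decide]

lemma br3 : ⁅EE F 0 1, EE F 1 2⁆ = EE F 0 2 := by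
  simp [Ring.lie_def, EE, show (2:Fin 3) ≠ 0 by decide]

/-- The substitution. -/
noncomputable def vsub (m : ℕ) (β γ : Fin m → F) : ZMod 3 × ℕ → Matrix (Fin 3) (Fin 3) F :=
  fun p =>
    if p.1 = 0 then
      (if h : p.2 < m then β ⟨p.2, h⟩ • EE F 1 1 + γ ⟨p.2, h⟩ • EE F 2 2 else 0)
    else if p.1 = 1 then (if p.2 = 0 then EE F 0 1 else if p.2 = 1 then EE F 1 2 else 0)
    else 0

lemma EE_mem (i j : Fin 3) (hij : i ≤ j) (g : ZMod 3)
    (hg : ((j : ℕ) : ZMod 3) - ((i : ℕ) : ZMod 3) = g) : EE F i j ∈ Lcomp F 3 g := by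
  exact Submodule.subset_span ⟨i, j, hij, hg, rfl⟩

lemma vsub_graded (m : ℕ) (β γ : Fin m → F) : ∀ g i, vsub m β γ (g, i) ∈ Lcomp F 3 g := by
  intro g i
  unfold vsub
  by_cases h0 : g = 0
  · subst h0
    simp only [if_pos rfl]
    by_cases hi : i < m
    · rw [dif_pos hi]
      exact Submodule.add_mem _
        (Submodule.smul_mem _ _ (EE_mem (F := F) 1 1 le_rfl 0 (by decide)))
        (Submodule.smul_mem _ _ (EE_mem (F := F) 2 2 le_rfl 0 (by decide)))
    · rw [dif_neg hi]; exact Submodule.zero_mem _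
  · simp only [if_neg h0]
    by_cases h1 : g = 1
    · subst h1
      simp only [if_pos rfl]
      by_cases hi0 : i = 0
      · simp only [if_pos hi0]
        exact EE_mem (F := F) 0 1 (by decide) 1 (by decide)
      · simp only [if_neg hi0]
        by_cases hi1 : i = 1
        · simp only [if_pos hi1]
          exact EE_mem (F := F) 1 2 (by decide) 1 (by decide)
        · simp [hi1, Submodule.zero_mem]
    · simp [h1, Submodule.zero_mem]

lemma lift_lnw (v : ZMod 3 × ℕ → Matrix (Fin 3) (Fin 3) F) (l : List (FreeGLie F 3))
    (x : FreeGLie F 3) :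
    FreeLieAlgebra.lift F v (lnw F 3 x l) =
      (l.map (FreeLieAlgebra.lift F v)).foldl (fun a b => ⁅a, b⁆)
        (FreeLieAlgebra.lift F v x) := by
  induction l generalizing x with
  | nil => rfl
  | cons hd tl ih =>
    show FreeLieAlgebra.lift F v (lnw F 3 ⁅x, hd⁆ tl) = _
    rw [ih]
    simp [LieHom.map_lie]

/-- foldl of brackets against "diagonal" elements scales. -/
lemma foldl_scale {m : ℕ} (M : Matrix (Fin 3) (Fin 3) F) (D : Fin m → Matrix (Fin 3) (Fin 3) F)
    (w : Fin m → F) (hM : ∀ i, ⁅M, D i⁆ = w i • M) :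
    ∀ (L : List (Fin m)) (t : F),
      (L.map D).foldl (fun a b => ⁅a, b⁆) (t • M) = ((L.map w).prod * t) • M := by
  intro L
  induction L with
  | nil => intro t; simp
  | cons i L ih =>
    intro t
    have : ⁅t • M, D i⁆ = (w i * t) • M := by
      rw [smul_lie, hM, smul_smul, mul_comm]
    simp only [List.map_cons, List.foldl_cons, this, ih, List.prod_cons]
    ring_nf

def Lrep {m : ℕ} (a : Fin m → ℕ) : List (Fin m) :=
  (List.finRange m).flatMap fun i => List.replicate (a i) i

lemma ybF_eq {m : ℕ} (a : Fin m → ℕ) :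
    ybF F 3 m a = (Lrep a).map (fun i => yv F 3 i.val) := by
  simp [ybF, Lrep, List.map_flatMap]

lemma Lrep_prod {m : ℕ} (a : Fin m → ℕ) (w : Fin m → F) :
    ((Lrep a).map w).prod = ∏ i, w i ^ a i := by
  rw [Lrep, List.map_flatMap]
  simp only [List.map_replicate]
  rw [List.flatMap, List.prod_flatten, List.map_map]
  rw [Fin.prod_univ_def]
  congr 1
  simp [Function.comp, List.prod_replicate]

lemma lift_yv {m : ℕ} (β γ : Fin m → F) (i : Fin m) :
    FreeLieAlgebra.lift F (vsub m β γ) (yv F 3 i.val) =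
      β i • EE F 1 1 + γ i • EE F 2 2 := by
  rw [yv, lift_of_apply]
  simp [vsub, i.isLt]

lemma lift_com11 {m : ℕ} (β γ : Fin m → F) (a b : Fin m → ℕ) :
    FreeLieAlgebra.lift F (vsub m β γ) (com11 F m a b) =
      ((∏ i, β i ^ a i) * ∏ i, γ i ^ b i) • EE F 0 2 := by
  rw [com11, lift_lnw]
  have hz1 : FreeLieAlgebra.lift F (vsub m β γ) (FreeLieAlgebra.of F ((1 : ZMod 3), 0)) =
      EE F 0 1 := by rw [lift_of_apply]; simp [vsub]
  have hz2 : FreeLieAlgebra.lift F (vsub m β γ) (FreeLieAlgebra.of F ((1 : ZMod 3), 1)) =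
      EE F 1 2 := by rw [lift_of_apply]; simp [vsub]
  have hmapa : (ybF F 3 m a).map (FreeLieAlgebra.lift F (vsub m β γ)) =
      (Lrep a).map (fun i => β i • EE F 1 1 + γ i • EE F 2 2) := by
    rw [ybF_eq, List.map_map]
    exact List.map_congr_left fun i _ => lift_yv β γ i
  have hmapb : (ybF F 3 m b).map (FreeLieAlgebra.lift F (vsub m β γ)) =
      (Lrep b).map (fun i => β i • EE F 1 1 + γ i • EE F 2 2) := by
    rw [ybF_eq, List.map_map]
    exact List.map_congr_left fun i _ => lift_yv β γ i
  rw [List.map_append, List.map_append, List.foldl_append, List.foldl_append]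
  rw [hmapa, hmapb, hz1]
  have h1 : List.foldl (fun x y : Matrix (Fin 3) (Fin 3) F => ⁅x, y⁆) (EE F 0 1)
      ((Lrep a).map (fun i => β i • EE F 1 1 + γ i • EE F 2 2)) =
      (∏ i, β i ^ a i) • EE F 0 1 := by
    have := foldl_scale (EE F 0 1) (fun i => β i • EE F 1 1 + γ i • EE F 2 2) β
      (fun i => br1 (β i) (γ i)) (Lrep a) 1
    rw [one_smul] at this
    rw [this, Lrep_prod, mul_one]
  rw [h1]
  simp only [List.map_cons, List.map_nil, List.foldl_cons, List.foldl_nil, hz2]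
  rw [smul_lie, br3]
  have := foldl_scale (EE F 0 2) (fun i => β i • EE F 1 1 + γ i • EE F 2 2) γ
    (fun i => br2 (β i) (γ i)) (Lrep b) (∏ i, β i ^ a i)
  rw [this, Lrep_prod, mul_comm]

end Stmt7Aux

/-- The commutators `[z₁, a₁y₁,…,aₘyₘ, z₂, b₁y₁,…,bₘyₘ]`, over all choices
of nonnegative exponent vectors `(a, b)`, are linearly independent modulo the ideal of
`ZMod 3`-graded identities of `UT₃(F)⁽⁻⁾`: no nontrivial `F`-linear combination of distinct
such commutators is a graded identity of `UT₃(F)⁽⁻⁾`. -/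
theorem stmt7 (F : Type) [Field F] [Infinite F] (m : ℕ)
    (s : Finset ((Fin m → ℕ) × (Fin m → ℕ))) (c : (Fin m → ℕ) × (Fin m → ℕ) → F)
    (h : (∑ ab ∈ s, c ab • com11 F m ab.1 ab.2) ∈ gradedId F 3) :
    ∀ ab ∈ s, c ab = 0 := by
  -- main proof
  intro ab hab
  -- evaluation gives a vanishing polynomial identity
  have key : ∀ β γ : Fin m → F,
      (∑ p ∈ s, c p * ((∏ i, β i ^ p.1 i) * ∏ i, γ i ^ p.2 i)) = 0 := by
    intro β γ
    have h0 := h (Stmt7Aux.vsub m β γ) (Stmt7Aux.vsub_graded m β γ)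
    rw [show ((FreeLieAlgebra.lift F (Stmt7Aux.vsub m β γ) : FreeGLie F 3 →ₗ⁅F⁆ _) :
        FreeGLie F 3 → Matrix (Fin 3) (Fin 3) F) =
        (FreeLieAlgebra.lift F (Stmt7Aux.vsub m β γ)).toLinearMap from rfl,
      map_sum] at h0
    simp only [LinearMap.map_smul, LieHom.coe_toLinearMap] at h0
    simp only [map_smul, Stmt7Aux.lift_com11] at h0
    have h1 : (∑ p ∈ s, (c p * ((∏ i, β i ^ p.1 i) * ∏ i, γ i ^ p.2 i))
        • Stmt7Aux.EE F 0 2) = 0 := by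
      simpa only [smul_smul] using h0
    rw [← Finset.sum_smul] at h1
    have h2 := congrFun (congrFun h1 0) 2
    simpa [Stmt7Aux.EE, Matrix.single] using h2
  classical
  -- encode as a multivariate polynomial
  set expo : (Fin m → ℕ) × (Fin m → ℕ) → ((Fin m ⊕ Fin m) →₀ ℕ) :=
    fun p => Finsupp.equivFunOnFinite.symm (Sum.elim p.1 p.2) with hexpo
  have expo_inj : Function.Injective expo := by
    intro p q hpq
    have := Finsupp.equivFunOnFinite.symm.injective hpq
    ext i
    · exact congrFun this (Sum.inl i)
    · exact congrFun this (Sum.inr i)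
  set P : MvPolynomial (Fin m ⊕ Fin m) F :=
    ∑ p ∈ s, MvPolynomial.monomial (expo p) (c p) with hP
  have hev : ∀ x : (Fin m ⊕ Fin m) → F, MvPolynomial.eval x P = 0 := by
    intro x
    rw [hP, map_sum]
    have : ∀ p ∈ s, MvPolynomial.eval x (MvPolynomial.monomial (expo p) (c p)) =
        c p * ((∏ i, (x (Sum.inl i)) ^ p.1 i) * ∏ i, (x (Sum.inr i)) ^ p.2 i) := by
      intro p _
      rw [MvPolynomial.eval_monomial]
      congr 1
      rw [Finsupp.prod_fintype _ _ (fun i => pow_zero _)]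
      rw [Fintype.prod_sum_type]
      simp [hexpo, Finsupp.equivFunOnFinite]
    rw [Finset.sum_congr rfl this]
    exact key (fun i => x (Sum.inl i)) (fun i => x (Sum.inr i))
  have hP0 : P = 0 := by
    apply MvPolynomial.funext
    intro x
    rw [hev x, map_zero]
  have := congrArg (MvPolynomial.coeff (expo ab)) hP0
  rw [hP, MvPolynomial.coeff_zero] at this
  rw [MvPolynomial.coeff_sum] at this
  rw [Finset.sum_eq_single ab (fun p hp hne => by
      rw [MvPolynomial.coeff_monomial, if_neg (fun hc => hne (expo_inj hc))])
    (fun hns => absurd hab hns)] at this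
  rwa [MvPolynomial.coeff_monomial, if_pos rfl] at this
end

section
/- Let F be an infinite field, n ≥ 2, and I = T_{Z_n}(UT_n(F)^{(-)}) the ideal of Z_n-graded identities of UT_n(F)^{(-)} with its canonical Z_n-grading. Let z_1,…,z_k be variables of nonzero degrees g_1,…,g_k ∈ Z_n with g_1 + ⋯ + g_k ≤ n − 1 (as integers in {1,…,n−1}), and let y, y_1,…,y_k be degree-0 variables. Set f = [z_1, y_1, z_2, y_2, …, z_k, y_k] (left-normed). Then for each 1 ≤ i ≤ k, the polynomial g = [z_1, y_1, …, z_{i−1}, y_{i−1}, z_i, y, y_i, z_{i+1}, …, z_k, y_k] lies in ⟨{f} ∪ I⟩, the smallest T_{Z_n}-ideal containing f and I. -/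
open FreeLieAlgebra

attribute [local instance 100] LieRing.ofAssociativeRing

/-- The variable `z_j` of nonzero degree `g j` (the `j`-th of the `k+1` fixed variables of
nonzero degree; distinct `j` give distinct variables). -/
noncomputable def zvG (F : Type) [Field F] (n k : ℕ) (g : Fin (k + 1) → ZMod n)
    (j : Fin (k + 1)) : FreeGLie F n :=
  FreeLieAlgebra.of F (g j, j.val)

/-- The left-normed commutator `[z₁, w₁, z₂, w₂, …, z_{k+1}, w_{k+1}]`, where `w_j` is an
arbitrary finite list of entries inserted after `z_j`. -/
noncomputable def chainIns (F : Type) [Field F] (n k : ℕ) (g : Fin (k + 1) → ZMod n)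
    (ins : Fin (k + 1) → List (FreeGLie F n)) : FreeGLie F n :=
  lnw F n (zvG F n k g 0)
    ((List.finRange (k + 1)).flatMap fun j =>
      (if j = 0 then [] else [zvG F n k g j]) ++ ins j)


section lfoldAux

variable {L : Type*} [LieRing L]

/-- General left-normed bracket word in any Lie ring. -/
def lfold (x : L) (l : List L) : L := l.foldl (fun a b => ⁅a, b⁆) x

lemma lfold_append (x : L) (u v : List L) : lfold x (u ++ v) = lfold (lfold x u) v :=
  List.foldl_append ..

lemma lfold_cons (x a : L) (l : List L) : lfold x (a :: l) = lfold ⁅x, a⁆ l := rfl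

lemma lfold_zero (l : List L) : lfold (0 : L) l = 0 := by
  induction l with
  | nil => rfl
  | cons a l ih => rw [lfold_cons, zero_lie]; exact ih

lemma lfold_sub (x y : L) (l : List L) : lfold (x - y) l = lfold x l - lfold y l := by
  induction l generalizing x y with
  | nil => rfl
  | cons a l ih => rw [lfold_cons, sub_lie, ih, lfold_cons, lfold_cons]

lemma lfold_mid_zero (x : L) (u v : List L) : lfold x (u ++ (0 : L) :: v) = 0 := by
  rw [lfold_append, lfold_cons, lie_zero, lfold_zero]

lemma lfold_jacobi (x a b : L) (u v : List L) :
    lfold x (u ++ ⁅a, b⁆ :: v) = lfold x (u ++ a :: b :: v) - lfold x (u ++ b :: a :: v) := by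
  rw [lfold_append, lfold_append, lfold_append, lfold_cons, lfold_cons, lfold_cons,
    lfold_cons, lfold_cons, ← lfold_sub]
  congr 1
  rw [lie_lie, ← lie_skew a ⁅lfold x u, b⁆]
  abel

lemma List.flatMap_congr' {α β : Type*} {l : List α} {f g : α → List β}
    (h : ∀ a ∈ l, f a = g a) : l.flatMap f = l.flatMap g := by
  induction l with
  | nil => rfl
  | cons a l ih =>
    simp only [List.flatMap_cons, h a (by simp), ih fun a ha => h a (by simp [ha])]

end lfoldAux

lemma lieHom_lfold {R L L' : Type*} [CommRing R] [LieRing L] [LieAlgebra R L] [LieRing L']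
    [LieAlgebra R L'] (phi : L →ₗ⁅R⁆ L') (x : L) (l : List L) :
    phi (lfold x l) = lfold (phi x) (l.map phi) := by
  induction l generalizing x with
  | nil => rfl
  | cons a l ih => rw [lfold_cons, List.map_cons, lfold_cons, ← LieHom.map_lie, ih]

lemma lnw_eq_lfold (F : Type) [Field F] (n : ℕ) (x : FreeGLie F n) (l : List (FreeGLie F n)) :
    lnw F n x l = lfold x l := rfl

lemma Lcomp_zero_bracket (F : Type) [Field F] (n : ℕ)
    {A B : Matrix (Fin n) (Fin n) F} (hA : A ∈ Lcomp F n 0) (hB : B ∈ Lcomp F n 0) :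
    ⁅A, B⁆ = 0 := by
  rw [Ring.lie_def, sub_eq_zero]
  have hgen : ∀ C ∈ {A : Matrix (Fin n) (Fin n) F | ∃ i j : Fin n, i ≤ j ∧
      ((j : ℕ) : ZMod n) - ((i : ℕ) : ZMod n) = 0 ∧ A = Matrix.single i j 1},
      ∃ i : Fin n, C = Matrix.single i i 1 := by
    rintro C ⟨i, j, hij, hz, rfl⟩
    rw [sub_eq_zero] at hz
    have : (j : Fin n).val = i.val := by
      have h1 := ZMod.val_cast_of_lt (n := n) j.isLt
      have h2 := ZMod.val_cast_of_lt (n := n) i.isLt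
      rw [← h1, ← h2, hz]
    exact ⟨i, by rw [Fin.ext this]⟩
  induction hA, hB using Submodule.span_induction₂ with
  | mem_mem x y hx hy =>
    obtain ⟨i, rfl⟩ := hgen x hx
    obtain ⟨j, rfl⟩ := hgen y hy
    by_cases h : i = j
    · subst h; rfl
    · rw [Matrix.single_mul_single_of_ne (h := h),
        Matrix.single_mul_single_of_ne (h := Ne.symm h)]
  | zero_left y hy => simp
  | zero_right x hx => simp
  | add_left x y z hx hy hz h1 h2 => rw [add_mul, mul_add, h1, h2]
  | add_right x y z hx hy hz h1 h2 => rw [mul_add, add_mul, h1, h2]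
  | smul_left r x y hx hy h => rw [smul_mul_assoc, mul_smul_comm, h]
  | smul_right r x y hx hy h => rw [smul_mul_assoc, mul_smul_comm, h]

/-- A left-normed word one of whose letters is a bracket of two degree-0 variables is a
graded identity of `UT_n(F)⁽⁻⁾` (the degree-0 component is abelian). -/
lemma lfold_letter_mem_gradedId (F : Type) [Field F] (n : ℕ) (x : FreeGLie F n)
    (u w : List (FreeGLie F n)) (a b : ℕ) :
    lfold x (u ++ ⁅yv F n a, yv F n b⁆ :: w) ∈ gradedId F n := by
  simp only [gradedId, Set.mem_setOf_eq]
  intro v hv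
  rw [show ((FreeLieAlgebra.lift F) v) (lfold x (u ++ ⁅yv F n a, yv F n b⁆ :: w)) =
      lfold (((FreeLieAlgebra.lift F) v) x)
        ((u ++ ⁅yv F n a, yv F n b⁆ :: w).map ((FreeLieAlgebra.lift F) v)) from
    lieHom_lfold _ _ _, List.map_append, List.map_cons]
  have hz : ((FreeLieAlgebra.lift F) v) ⁅yv F n a, yv F n b⁆ = 0 := by
    rw [LieHom.map_lie]
    simp only [yv, FreeLieAlgebra.lift_of_apply]
    exact Lcomp_zero_bracket F n (hv 0 a) (hv 0 b)
  rw [hz, lfold_mid_zero]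

/-- Let `z₁,…,z_{k+1}` have nonzero degrees `g₁,…,g_{k+1}` with
`g₁ + ⋯ + g_{k+1} ≤ n - 1` (as integers in `{1,…,n-1}`), and let
`f = [z₁, y₁, z₂, y₂, …, z_{k+1}, y_{k+1}]`. Then for each `i`, the polynomial
`g = [z₁, y₁, …, z_{i-1}, y_{i-1}, z_i, y, y_i, z_{i+1}, …, z_{k+1}, y_{k+1}]` obtained by
inserting a fresh degree-0 variable `y` right after `z_i` lies in the smallest `T`-ideal
containing `f` and the ideal `I` of `ZMod n`-graded identities of `UT_n(F)⁽⁻⁾`.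
(Here `y_j` is the degree-0 variable with index `j` and `y` the one with index `k+1`.) -/
theorem stmt13 (F : Type) [Field F] [Infinite F] (n k : ℕ) (hn : 2 ≤ n)
    (g : Fin (k + 1) → ZMod n) (hg : ∀ j, g j ≠ 0)
    (hsum : ∑ j, (g j).val ≤ n - 1) (i : Fin (k + 1)) :
    chainIns F n k g
        (fun j => if j = i then [yv F n (k + 1), yv F n j.val] else [yv F n j.val]) ∈
      TClosure F n
        ({chainIns F n k g (fun j => [yv F n j.val])} ∪ gradedId F n) := by
  classical
  intro T hT
  obtain ⟨⟨⟨J, hJ⟩, hsubst⟩, hST⟩ := hT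
  have hmem : ∀ x : FreeGLie F n, x ∈ T ↔ x ∈ J := fun x => by rw [hJ]; exact Iff.rfl
  have hfT : chainIns F n k g (fun j => [yv F n j.val]) ∈ T :=
    hST (Set.mem_union_left _ rfl)
  have hIT : gradedId F n ⊆ T := fun x hx => hST (Set.mem_union_right _ hx)
  -- the graded substitution `z_i ↦ ⁅z_i, y⁆`
  have key : ∀ i : Fin (k + 1), ∃ phi : FreeGLie F n →ₗ⁅F⁆ FreeGLie F n,
      (∀ x ∈ T, phi x ∈ T) ∧
      phi (zvG F n k g i) = ⁅zvG F n k g i, yv F n (k + 1)⁆ ∧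
      (∀ j, j ≠ i → phi (zvG F n k g j) = zvG F n k g j) ∧
      (∀ m', phi (yv F n m') = yv F n m') := by
    intro i
    set s : ZMod n × ℕ → FreeGLie F n := fun p => if p = (g i, i.val) then
        ⁅zvG F n k g i, yv F n (k + 1)⁆ else FreeLieAlgebra.of F p with hs_def
    have hs : IsGradedSubst F n s := by
      intro g' m'
      by_cases hp : ((g', m') : ZMod n × ℕ) = (g i, i.val)
      · have hg' : g' = g i := (Prod.ext_iff.mp hp).1
        simp only [hs_def, if_pos hp]
        rw [hg']
        apply Submodule.subset_span
        have hw := HomWord.bracket (F := F) (n := n)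
          (HomWord.of (g i) i.val) (HomWord.of 0 (k + 1))
        rw [add_zero] at hw
        exact hw
      · simp only [hs_def, if_neg hp]
        exact Submodule.subset_span (HomWord.of g' m')
    refine ⟨FreeLieAlgebra.lift F s, fun x hx => hsubst s hs x hx, ?_, ?_, ?_⟩
    · show (FreeLieAlgebra.lift F) s (FreeLieAlgebra.of F (g i, i.val)) = _
      rw [FreeLieAlgebra.lift_of_apply]
      simp only [hs_def, if_pos rfl]
    · intro j hj
      show (FreeLieAlgebra.lift F) s (FreeLieAlgebra.of F (g j, j.val)) = _
      rw [FreeLieAlgebra.lift_of_apply]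
      simp only [hs_def]
      rw [if_neg fun hc => hj (Fin.ext (Prod.ext_iff.mp hc).2)]
      rfl
    · intro m'
      show (FreeLieAlgebra.lift F) s (FreeLieAlgebra.of F ((0 : ZMod n), m')) = _
      rw [FreeLieAlgebra.lift_of_apply]
      simp only [hs_def]
      rw [if_neg fun hc => hg i ((Prod.ext_iff.mp hc).1).symm]
      rfl
  have main : ∀ (m : ℕ) (h : m < k + 1),
      chainIns F n k g (fun j => if j = (⟨m, h⟩ : Fin (k + 1)) then
        [yv F n (k + 1), yv F n j.val] else [yv F n j.val]) ∈ T := by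
    intro m
    induction m with
    | zero =>
      intro h
      obtain ⟨phi, hphiT, hphizi, hphizj, hphiY⟩ := key ⟨0, h⟩
      have hi0 : (⟨0, h⟩ : Fin (k + 1)) = 0 := rfl
      have htail : ∀ j ∈ (List.finRange k).map Fin.succ, j ≠ (⟨0, h⟩ : Fin (k + 1)) := by
        intro j hj
        obtain ⟨a, -, rfl⟩ := List.mem_map.mp hj
        rw [hi0]; exact Fin.succ_ne_zero a
      set V := ((List.finRange k).map Fin.succ).flatMap
          (fun j => (if j = 0 then [] else [zvG F n k g j]) ++ [yv F n j.val]) with hV_def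
      have hfeq : chainIns F n k g (fun j => [yv F n j.val]) =
          lfold (zvG F n k g 0) (yv F n 0 :: V) := by
        simp only [chainIns, lnw_eq_lfold, List.finRange_succ, List.flatMap_cons, hV_def]
        simp
      have hteq : chainIns F n k g (fun j => if j = (⟨0, h⟩ : Fin (k + 1)) then
            [yv F n (k + 1), yv F n j.val] else [yv F n j.val]) =
          lfold ⁅zvG F n k g 0, yv F n (k + 1)⁆ (yv F n 0 :: V) := by
        simp only [chainIns, lnw_eq_lfold, List.finRange_succ, List.flatMap_cons, hV_def]
        rw [List.flatMap_congr' (g := fun j => (if j = 0 then [] else [zvG F n k g j]) ++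
            [yv F n j.val]) (fun j hj => by rw [if_neg (htail j hj)])]
        simp [← lfold_cons]
      have hphif : phi (chainIns F n k g (fun j => [yv F n j.val])) =
          lfold ⁅zvG F n k g 0, yv F n (k + 1)⁆ (yv F n 0 :: V) := by
        rw [hfeq, lieHom_lfold, show phi (zvG F n k g 0) = ⁅zvG F n k g 0, yv F n (k + 1)⁆ by
          rw [← hi0]; exact hphizi]
        congr 1
        rw [List.map_cons, hphiY 0]
        congr 1
        rw [hV_def, List.map_flatMap]
        refine List.flatMap_congr' fun j hj => ?_
        by_cases hj0 : j = 0
        · simp [hj0, hphiY]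
        · simp [hj0, hphiY, hphizj j (htail j hj)]
      rw [hteq, ← hphif]
      exact hphiT _ hfT
    | succ m ih =>
      intro h
      set i : Fin (k + 1) := ⟨m + 1, h⟩ with hi_def
      set i' : Fin (k + 1) := ⟨m, Nat.lt_of_succ_lt h⟩ with hi'_def
      have hii' : i' ≠ i := by simp [hi_def, hi'_def, Fin.ext_iff]
      have hi0 : i ≠ 0 := by simp [hi_def, Fin.ext_iff]
      have hv1 : i'.val = m := by rw [hi'_def]
      have hv2 : i.val = m + 1 := by rw [hi_def]
      obtain ⟨phi, hphiT, hphizi, hphizj, hphiY⟩ := key i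
      set l₁ := (List.finRange (k + 1)).take m with hl₁_def
      set l₂ := (List.finRange (k + 1)).drop (m + 2) with hl₂_def
      have hdec : List.finRange (k + 1) = l₁ ++ i' :: i :: l₂ := by
        have e1 : (List.finRange (k + 1)).drop m =
            i' :: (List.finRange (k + 1)).drop (m + 1) := by
          rw [List.drop_eq_getElem_cons
            (by rw [List.length_finRange]; omega : m < (List.finRange (k + 1)).length)]
          congr 1
          simp [List.getElem_finRange, hi'_def, Fin.ext_iff]
        have e2 : (List.finRange (k + 1)).drop (m + 1) =
            i :: (List.finRange (k + 1)).drop (m + 2) := by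
          rw [List.drop_eq_getElem_cons
            (by rw [List.length_finRange]; omega : m + 1 < (List.finRange (k + 1)).length)]
          congr 1
          simp [List.getElem_finRange, hi_def, Fin.ext_iff]
        conv_lhs => rw [← List.take_append_drop m (List.finRange (k + 1)), e1, e2]
      have hnd := List.nodup_finRange (k + 1)
      rw [hdec] at hnd
      obtain ⟨-, hnd2, hdisj⟩ := List.nodup_append.mp hnd
      rw [List.nodup_cons, List.mem_cons] at hnd2
      push_neg at hnd2
      obtain ⟨⟨-, hi'l₂⟩, hnd3⟩ := hnd2
      rw [List.nodup_cons] at hnd3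
      obtain ⟨hil₂, -⟩ := hnd3
      have hl₁f : ∀ j ∈ l₁, j ≠ i' ∧ j ≠ i := by
        intro j hj
        have hmem2 : j ∉ i' :: i :: l₂ := fun hm => hdisj j hj j hm rfl
        exact ⟨fun e => hmem2 (by rw [e]; exact List.mem_cons_self),
          fun e => hmem2 (by rw [e]; exact List.mem_cons_of_mem _ List.mem_cons_self)⟩
      have hl₂f : ∀ j ∈ l₂, j ≠ i' ∧ j ≠ i := by
        intro j hj
        exact ⟨fun e => hi'l₂ (e ▸ hj), fun e => hil₂ (e ▸ hj)⟩
      set U := l₁.flatMap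
          (fun j => (if j = 0 then [] else [zvG F n k g j]) ++ [yv F n j.val]) with hU_def
      set V := l₂.flatMap
          (fun j => (if j = 0 then [] else [zvG F n k g j]) ++ [yv F n j.val]) with hV_def
      set d := (if i' = (0 : Fin (k + 1)) then ([] : List (FreeGLie F n))
          else [zvG F n k g i']) with hd_def
      -- the five relevant words
      have hfeq : chainIns F n k g (fun j => [yv F n j.val]) =
          lfold (zvG F n k g 0) (U ++ (d ++ (yv F n m :: zvG F n k g i ::
            yv F n (m + 1) :: V))) := by
        simp only [chainIns, lnw_eq_lfold]
        rw [hdec, List.flatMap_append, List.flatMap_cons, List.flatMap_cons]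
        rw [if_neg hi0, ← hU_def, ← hV_def, ← hd_def, hv1, hv2]
        simp only [List.append_assoc, List.cons_append, List.singleton_append,
          List.nil_append]
      have hteq : chainIns F n k g (fun j => if j = i then
            [yv F n (k + 1), yv F n j.val] else [yv F n j.val]) =
          lfold (zvG F n k g 0) (U ++ (d ++ (yv F n m :: zvG F n k g i ::
            yv F n (k + 1) :: yv F n (m + 1) :: V))) := by
        simp only [chainIns, lnw_eq_lfold]
        rw [hdec, List.flatMap_append, List.flatMap_cons, List.flatMap_cons]
        rw [List.flatMap_congr' (l := l₁)
            (g := fun j => (if j = 0 then [] else [zvG F n k g j]) ++ [yv F n j.val])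
            (fun j hj => by rw [if_neg (hl₁f j hj).2]),
          List.flatMap_congr' (l := l₂)
            (g := fun j => (if j = 0 then [] else [zvG F n k g j]) ++ [yv F n j.val])
            (fun j hj => by rw [if_neg (hl₂f j hj).2])]
        rw [if_neg hi0, if_neg hii', if_pos rfl, ← hU_def, ← hV_def, ← hd_def, hv1, hv2]
        simp only [List.append_assoc, List.cons_append, List.singleton_append,
          List.nil_append]
      have ht'eq : chainIns F n k g (fun j => if j = i' then
            [yv F n (k + 1), yv F n j.val] else [yv F n j.val]) =
          lfold (zvG F n k g 0) (U ++ (d ++ (yv F n (k + 1) :: yv F n m ::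
            zvG F n k g i :: yv F n (m + 1) :: V))) := by
        simp only [chainIns, lnw_eq_lfold]
        rw [hdec, List.flatMap_append, List.flatMap_cons, List.flatMap_cons]
        rw [List.flatMap_congr' (l := l₁)
            (g := fun j => (if j = 0 then [] else [zvG F n k g j]) ++ [yv F n j.val])
            (fun j hj => by rw [if_neg (hl₁f j hj).1]),
          List.flatMap_congr' (l := l₂)
            (g := fun j => (if j = 0 then [] else [zvG F n k g j]) ++ [yv F n j.val])
            (fun j hj => by rw [if_neg (hl₂f j hj).1])]
        rw [if_neg hi0, if_pos rfl, if_neg (Ne.symm hii'), ← hU_def, ← hV_def, ← hd_def,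
          hv1, hv2]
        simp only [List.append_assoc, List.cons_append, List.singleton_append,
          List.nil_append]
      have hmapU : U.map phi = U := by
        rw [hU_def, List.map_flatMap]
        refine List.flatMap_congr' fun j hj => ?_
        by_cases hj0 : j = 0
        · simp [hj0, hphiY]
        · simp [hj0, hphiY, hphizj j (hl₁f j hj).2]
      have hmapV : V.map phi = V := by
        rw [hV_def, List.map_flatMap]
        refine List.flatMap_congr' fun j hj => ?_
        by_cases hj0 : j = 0
        · simp [hj0, hphiY]
        · simp [hj0, hphiY, hphizj j (hl₂f j hj).2]
      have hmapd : d.map phi = d := by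
        rw [hd_def]
        by_cases h0 : i' = 0
        · simp [h0]
        · simp [h0, hphizj i' hii']
      have hphif : phi (chainIns F n k g (fun j => [yv F n j.val])) =
          lfold (zvG F n k g 0) (U ++ (d ++ (yv F n m :: ⁅zvG F n k g i, yv F n (k + 1)⁆ ::
            yv F n (m + 1) :: V))) := by
        rw [hfeq, lieHom_lfold, List.map_append, List.map_append, List.map_cons,
          List.map_cons, List.map_cons, hmapU, hmapV, hmapd, hphiY, hphiY, hphizi,
          hphizj 0 (Ne.symm hi0)]
      have J1 := lfold_jacobi (zvG F n k g 0) (zvG F n k g i) (yv F n (k + 1))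
        (U ++ (d ++ [yv F n m])) (yv F n (m + 1) :: V)
      simp only [List.append_assoc, List.cons_append, List.singleton_append,
        List.nil_append] at J1
      have J2 := lfold_jacobi (zvG F n k g 0) (yv F n (k + 1)) (yv F n m)
        (U ++ d) (zvG F n k g i :: yv F n (m + 1) :: V)
      simp only [List.append_assoc, List.cons_append, List.singleton_append,
        List.nil_append] at J2
      have hf''I : lfold (zvG F n k g 0) (U ++ (d ++ (⁅yv F n (k + 1), yv F n m⁆ ::
          zvG F n k g i :: yv F n (m + 1) :: V))) ∈ gradedId F n := by
        have := lfold_letter_mem_gradedId F n (zvG F n k g 0) (U ++ d)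
          (zvG F n k g i :: yv F n (m + 1) :: V) (k + 1) m
        simpa only [List.append_assoc, List.cons_append, List.singleton_append,
          List.nil_append] using this
      have ht'T := ih (Nat.lt_of_succ_lt h)
      rw [← hi'_def, ht'eq] at ht'T
      have hEsT : lfold (zvG F n k g 0) (U ++ (d ++ (yv F n m ::
          ⁅zvG F n k g i, yv F n (k + 1)⁆ :: yv F n (m + 1) :: V))) ∈ T := by
        rw [← hphif]; exact hphiT _ hfT
      have hkeyeq : lfold (zvG F n k g 0) (U ++ (d ++ (yv F n m :: zvG F n k g i ::
            yv F n (k + 1) :: yv F n (m + 1) :: V))) =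
          lfold (zvG F n k g 0) (U ++ (d ++ (yv F n m :: ⁅zvG F n k g i, yv F n (k + 1)⁆ ::
            yv F n (m + 1) :: V))) +
          lfold (zvG F n k g 0) (U ++ (d ++ (yv F n (k + 1) :: yv F n m ::
            zvG F n k g i :: yv F n (m + 1) :: V))) -
          lfold (zvG F n k g 0) (U ++ (d ++ (⁅yv F n (k + 1), yv F n m⁆ ::
            zvG F n k g i :: yv F n (m + 1) :: V))) := by
        rw [J1, J2]
        abel
      rw [hteq, hkeyeq, hmem]
      exact sub_mem (add_mem ((hmem _).mp hEsT) ((hmem _).mp ht'T))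
        ((hmem _).mp (hIT hf''I))
  have := main i.val i.isLt
  simpa only [Fin.eta] using this
end
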